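/- arXiv:1810.04857 — 8 statements merged into one kernel-verified Lean document; each statement's English description precedes it below -/
import Mathlib

section
/- With a₀,…,a₃ and g₀,…,g₃ as in the tetrahedron setup, the following identity of linear maps on ℝ³ holds: ∑_{0 ≤ i < j ≤ 3} (−⟨gᵢ, gⱼ⟩) · ((aⱼ − aᵢ) ⊗ (aⱼ − aᵢ)) = Id_{ℝ³}. (Lemma 4.4: in the paper's notation this is I = ∑_{E ∈ 𝒮_T¹} ω_E^T (|E|²/|T|) τ_E τ_Eᵀ, where for the edge E from aᵢ to aⱼ one has ω_E^T = −∫_T ⟨∇λᵢ, ∇λⱼ⟩ = −|T|⟨gᵢ,gⱼ⟩, |E| = ‖aⱼ−aᵢ‖, and τ_E = (aⱼ−aᵢ)/‖aⱼ−aᵢ‖.) -/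
open Matrix

private lemma aux_double (u v : Fin 4 → ℝ) (w z : Fin 4 → Fin 3 → ℝ) :
    ∑ i : Fin 4, ∑ j : Fin 4, (u i * v j) * (∑ p : Fin 3, w i p * z j p)
    = ∑ p : Fin 3, (∑ i : Fin 4, u i * w i p) * (∑ j : Fin 4, v j * z j p) := by
  calc ∑ i : Fin 4, ∑ j : Fin 4, (u i * v j) * (∑ p : Fin 3, w i p * z j p)
      = ∑ i : Fin 4, ∑ j : Fin 4, ∑ p : Fin 3, (u i * w i p) * (v j * z j p) := by
        refine Finset.sum_congr rfl fun i _ => Finset.sum_congr rfl fun j _ => ?_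
        rw [Finset.mul_sum]
        exact Finset.sum_congr rfl fun p _ => by ring
    _ = ∑ i : Fin 4, ∑ p : Fin 3, ∑ j : Fin 4, (u i * w i p) * (v j * z j p) :=
        Finset.sum_congr rfl fun i _ => Finset.sum_comm
    _ = ∑ p : Fin 3, ∑ i : Fin 4, ∑ j : Fin 4, (u i * w i p) * (v j * z j p) :=
        Finset.sum_comm
    _ = ∑ p : Fin 3, (∑ i : Fin 4, u i * w i p) * (∑ j : Fin 4, v j * z j p) := by
        refine Finset.sum_congr rfl fun p _ => ?_
        rw [Finset.sum_mul]
        exact Finset.sum_congr rfl fun i _ => by rw [Finset.mul_sum]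

private lemma aux_half (F : Fin 4 → Fin 4 → ℝ) (hsym : ∀ i j, F i j = F j i)
    (hdiag : ∀ i, F i i = 0) :
    2 * (∑ i : Fin 4, ∑ j : Fin 4, if i < j then F i j else 0)
      = ∑ i : Fin 4, ∑ j : Fin 4, F i j := by
  simp (config := { decide := true }) only [Fin.sum_univ_four, if_true, if_false, hdiag]
  rw [hsym 1 0, hsym 2 0, hsym 2 1, hsym 3 0, hsym 3 1, hsym 3 2]
  ring

/-- Lemma 4.4: for a nondegenerate tetrahedron with vertices `a 0, …, a 3`
and barycentric gradient vectors `g 0, …, g 3` (characterized by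
`⟨g i, a j − a k⟩ = δᵢⱼ − δᵢₖ`), one has
`∑_{i<j} (−⟨gᵢ,gⱼ⟩) (aⱼ−aᵢ)(aⱼ−aᵢ)ᵀ = I` as linear maps (matrices) on `ℝ³`,
where `v ⊗ w` is realized by the rank-one matrix `Matrix.vecMulVec v w`, whose action is
`x ↦ ⟨w, x⟩ · v`. -/
theorem stmt_3 (a : Fin 4 → Fin 3 → ℝ) (g : Fin 4 → Fin 3 → ℝ)
    (ha : AffineIndependent ℝ a)
    (hg : ∀ i j k : Fin 4, ∑ m, g i m * (a j m - a k m) =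
      (if i = j then (1 : ℝ) else 0) - (if i = k then (1 : ℝ) else 0)) :
    (∑ i : Fin 4, ∑ j : Fin 4,
        if i < j then
          (-(∑ m, g i m * g j m)) • Matrix.vecMulVec (a j - a i) (a j - a i)
        else 0) = (1 : Matrix (Fin 3) (Fin 3) ℝ) := by
  classical
  -- the 3×3 matrices of gradients and edge vectors
  set G3 : Matrix (Fin 3) (Fin 3) ℝ := Matrix.of (fun i p => g i.succ p) with hG3
  set D : Matrix (Fin 3) (Fin 3) ℝ := Matrix.of (fun j p => a j.succ p - a 0 p) with hDdef
  have hGD : G3 * Dᵀ = 1 := by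
    ext i j
    simp only [hG3, hDdef, Matrix.mul_apply, Matrix.transpose_apply, Matrix.of_apply,
      Matrix.one_apply]
    rw [hg i.succ j.succ 0]
    simp [Fin.succ_ne_zero, Fin.succ_inj]
  have hDG : Dᵀ * G3 = 1 := mul_eq_one_comm.mp hGD
  -- ∑ i (a i.succ - a 0)(r) * g i.succ (c) = δ_{rc}
  have hP : ∀ r p : Fin 3, ∑ i : Fin 3, (a i.succ r - a 0 r) * g i.succ p
      = if r = p then (1:ℝ) else 0 := by
    intro r p
    have h := congrFun (congrFun hDG r) p
    simpa [Matrix.mul_apply, Matrix.transpose_apply, Matrix.one_apply, hG3, hDdef] using h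
  -- ∑ over all four gradients vanishes
  have hs : ∀ p : Fin 3, ∑ i : Fin 4, g i p = 0 := by
    have hGtD : G3ᵀ * D = 1 := by
      have h := congrArg Matrix.transpose hDG
      rwa [Matrix.transpose_mul, Matrix.transpose_transpose, Matrix.transpose_one] at h
    have hDs : D *ᵥ (fun p => ∑ i : Fin 4, g i p) = 0 := by
      funext j
      have hterm : ∀ i : Fin 4, ∑ p : Fin 3, (a j.succ p - a 0 p) * g i p
          = (if i = j.succ then (1:ℝ) else 0) - (if i = 0 then (1:ℝ) else 0) := by
        intro i
        rw [← hg i j.succ 0]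
        exact Finset.sum_congr rfl fun p _ => mul_comm _ _
      calc (D *ᵥ fun p => ∑ i : Fin 4, g i p) j
          = ∑ p : Fin 3, (a j.succ p - a 0 p) * ∑ i : Fin 4, g i p := by
            simp [Matrix.mulVec, dotProduct, hDdef]
        _ = ∑ p : Fin 3, ∑ i : Fin 4, (a j.succ p - a 0 p) * g i p :=
            Finset.sum_congr rfl fun p _ => Finset.mul_sum _ _ _
        _ = ∑ i : Fin 4, ∑ p : Fin 3, (a j.succ p - a 0 p) * g i p := Finset.sum_comm
        _ = ∑ i : Fin 4, ((if i = j.succ then (1:ℝ) else 0) - (if i = 0 then (1:ℝ) else 0)) :=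
            Finset.sum_congr rfl fun i _ => hterm i
        _ = 0 := by simp [Finset.sum_sub_distrib]
    have h0 : (fun p => ∑ i : Fin 4, g i p) = (0 : Fin 3 → ℝ) := by
      have h := congrArg (fun M : Matrix (Fin 3) (Fin 3) ℝ =>
        M *ᵥ (fun p => ∑ i : Fin 4, g i p)) hGtD
      simpa [← Matrix.mulVec_mulVec, hDs] using h.symm
    intro p; exact congrFun h0 p
  -- key: ∑ i, a i r * g i p = δ_{rp}
  have key : ∀ r p : Fin 3, ∑ i : Fin 4, a i r * g i p = if r = p then (1:ℝ) else 0 := by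
    intro r p
    have h1 : ∑ i : Fin 4, a i r * g i p
        = ∑ i : Fin 4, (a i r - a 0 r) * g i p + a 0 r * ∑ i : Fin 4, g i p := by
      rw [Finset.mul_sum, ← Finset.sum_add_distrib]
      exact Finset.sum_congr rfl fun i _ => by ring
    rw [h1, hs, mul_zero, add_zero, Fin.sum_univ_succ]
    simp only [sub_self, zero_mul, zero_add]
    exact hP r p
  -- now the entrywise computation
  ext r c
  simp only [Matrix.sum_apply, apply_ite (fun M : Matrix (Fin 3) (Fin 3) ℝ => M r c),
    Matrix.smul_apply, Matrix.zero_apply,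
    Matrix.vecMulVec_apply, Pi.sub_apply, smul_eq_mul, Matrix.one_apply]
  have hsym : ∀ i j : Fin 4,
      (-∑ p : Fin 3, g i p * g j p) * ((a j r - a i r) * (a j c - a i c))
      = (-∑ p : Fin 3, g j p * g i p) * ((a i r - a j r) * (a i c - a j c)) := by
    intro i j
    rw [show (∑ p : Fin 3, g j p * g i p) = ∑ p : Fin 3, g i p * g j p from
      Finset.sum_congr rfl fun p _ => mul_comm _ _]
    ring
  have hdiag : ∀ i : Fin 4,
      (-∑ p : Fin 3, g i p * g i p) * ((a i r - a i r) * (a i c - a i c)) = 0 := by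
    intro i; ring
  have h2 := aux_half
    (fun i j => (-∑ p : Fin 3, g i p * g j p) * ((a j r - a i r) * (a j c - a i c)))
    hsym hdiag
  -- total double sum equals 2δ
  have E1 : ∑ i : Fin 4, ∑ j : Fin 4,
      ((1:ℝ) * (a j r * a j c)) * (∑ p : Fin 3, g i p * g j p) = 0 := by
    rw [aux_double]
    refine Finset.sum_eq_zero fun p _ => ?_
    rw [show (∑ i : Fin 4, (1:ℝ) * g i p) = 0 from by simpa using hs p, zero_mul]
  have E2 : ∑ i : Fin 4, ∑ j : Fin 4,
      ((a i r * a i c) * (1:ℝ)) * (∑ p : Fin 3, g i p * g j p) = 0 := by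
    rw [aux_double]
    refine Finset.sum_eq_zero fun p _ => ?_
    rw [show (∑ j : Fin 4, (1:ℝ) * g j p) = 0 from by simpa using hs p, mul_zero]
  have E3 : ∑ i : Fin 4, ∑ j : Fin 4,
      (a i r * a j c) * (∑ p : Fin 3, g i p * g j p) = if r = c then (1:ℝ) else 0 := by
    rw [aux_double]
    simp only [key]
    rcases eq_or_ne r c with h | h
    · subst h; simp
    · rw [if_neg h]
      refine Finset.sum_eq_zero fun p _ => ?_
      rcases eq_or_ne r p with h2 | h2
      · subst h2; simp [Ne.symm h, h]
      · simp [h2]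
  have E4 : ∑ i : Fin 4, ∑ j : Fin 4,
      (a i c * a j r) * (∑ p : Fin 3, g i p * g j p) = if r = c then (1:ℝ) else 0 := by
    rw [aux_double]
    simp only [key]
    rcases eq_or_ne r c with h | h
    · subst h; simp
    · rw [if_neg h]
      refine Finset.sum_eq_zero fun p _ => ?_
      rcases eq_or_ne c p with h2 | h2
      · subst h2; simp [h]
      · simp [h2]
  have T : ∑ i : Fin 4, ∑ j : Fin 4,
      (-∑ p : Fin 3, g i p * g j p) * ((a j r - a i r) * (a j c - a i c))
      = 2 * (if r = c then (1:ℝ) else 0) := by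
    have split : ∑ i : Fin 4, ∑ j : Fin 4,
        (-∑ p : Fin 3, g i p * g j p) * ((a j r - a i r) * (a j c - a i c))
        = ∑ i : Fin 4, ∑ j : Fin 4,
            ((a i r * a j c) * (∑ p : Fin 3, g i p * g j p)
            + (a i c * a j r) * (∑ p : Fin 3, g i p * g j p)
            - ((1:ℝ) * (a j r * a j c)) * (∑ p : Fin 3, g i p * g j p)
            - ((a i r * a i c) * (1:ℝ)) * (∑ p : Fin 3, g i p * g j p)) := by
      refine Finset.sum_congr rfl fun i _ => Finset.sum_congr rfl fun j _ => ?_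
      ring
    rw [split]
    simp only [Finset.sum_sub_distrib, Finset.sum_add_distrib]
    rw [E1, E2, E3, E4]
    ring
  linarith [h2, T]
end

section
/- With a₀,…,a₃ and g₀,…,g₃ as in the tetrahedron setup, for every vector w ∈ ℝ³ one has ∑_{0 ≤ i < j ≤ 3} (−⟨gᵢ, gⱼ⟩) · ⟨w, aⱼ − aᵢ⟩ · (aⱼ − aᵢ) = w. (Lemma 4.5: the local averaging operator Π̄_T¹ w = ∑_{E} ω_E^T (|E|/|T|) l_E(w) τ_E, with ω_E^T = −|T|⟨gᵢ,gⱼ⟩ and l_E(w) = |E| w·τ_E for a constant field w, reproduces constant vector fields.) -/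
open Finset

/-- Auxiliary: a symmetric, zero-diagonal double sum over `i < j` is half the full sum. -/
lemma half_sum_aux (f : Fin 4 → Fin 4 → ℝ) (hsym : ∀ i j, f j i = f i j)
    (hdiag : ∀ i, f i i = 0) :
    2 * (∑ i : Fin 4, ∑ j : Fin 4, if i < j then f i j else 0)
      = ∑ i : Fin 4, ∑ j : Fin 4, f i j := by
  symm
  have split : ∀ i j : Fin 4, f i j =
      (if i < j then f i j else 0) + (if j < i then f i j else 0)
        + (if i = j then f i j else 0) := by
    intro i j
    rcases lt_trichotomy i j with h | h | h
    · simp [h, asymm h, h.ne]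
    · simp [h]
    · simp [h, asymm h, h.ne']
  have hB : (∑ i : Fin 4, ∑ j : Fin 4, if j < i then f i j else 0)
      = ∑ i : Fin 4, ∑ j : Fin 4, if i < j then f i j else 0 := by
    rw [Finset.sum_comm]
    apply Finset.sum_congr rfl; intro i _
    apply Finset.sum_congr rfl; intro j _
    rw [hsym]
  have hC : (∑ i : Fin 4, ∑ j : Fin 4, if i = j then f i j else 0) = 0 := by
    apply Finset.sum_eq_zero; intro i _
    simp [Finset.sum_ite_eq, hdiag i]
  calc ∑ i : Fin 4, ∑ j : Fin 4, f i j
      = ∑ i : Fin 4, ∑ j : Fin 4, ((if i < j then f i j else 0)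
          + (if j < i then f i j else 0) + (if i = j then f i j else 0)) := by
        apply Finset.sum_congr rfl; intro i _
        apply Finset.sum_congr rfl; intro j _
        exact split i j
    _ = (∑ i : Fin 4, ∑ j : Fin 4, if i < j then f i j else 0)
          + (∑ i : Fin 4, ∑ j : Fin 4, if j < i then f i j else 0)
          + (∑ i : Fin 4, ∑ j : Fin 4, if i = j then f i j else 0) := by
        simp [Finset.sum_add_distrib]
    _ = 2 * (∑ i : Fin 4, ∑ j : Fin 4, if i < j then f i j else 0) := by
        rw [hB, hC]; ring

/-- Lemma 4.5: for a nondegenerate tetrahedron with vertices `a 0, …, a 3`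
and barycentric gradient vectors `g 0, …, g 3` (characterized by
`⟨g i, a j − a k⟩ = δᵢⱼ − δᵢₖ`), the averaging operator reproduces constants:
for every `w ∈ ℝ³`, `∑_{i<j} (−⟨gᵢ,gⱼ⟩) ⟨w, aⱼ−aᵢ⟩ (aⱼ−aᵢ) = w`. -/
theorem stmt_4 (a : Fin 4 → Fin 3 → ℝ) (g : Fin 4 → Fin 3 → ℝ)
    (ha : AffineIndependent ℝ a)
    (hg : ∀ i j k : Fin 4, ∑ m, g i m * (a j m - a k m) =
      (if i = j then (1 : ℝ) else 0) - (if i = k then (1 : ℝ) else 0))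
    (w : Fin 3 → ℝ) :
    (∑ i : Fin 4, ∑ j : Fin 4,
        if i < j then
          ((-(∑ m, g i m * g j m)) * ∑ m, w m * (a j m - a i m)) • (a j - a i)
        else 0) = w := by
  classical
  set b : Fin 3 → (Fin 3 → ℝ) := fun j => a j.succ - a 0 with hbdef
  -- linear independence of the edge vectors from the vertex `a 0`
  have hli : LinearIndependent ℝ b := by
    have h := (affineIndependent_iff_linearIndependent_vsub ℝ a 0).mp ha
    have hinj : Function.Injective
        (fun j : Fin 3 => (⟨j.succ, Fin.succ_ne_zero j⟩ : {x : Fin 4 // x ≠ 0})) := by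
      intro x y hxy
      have : Fin.succ x = Fin.succ y := congrArg Subtype.val hxy
      exact Fin.succ_injective _ this
    have := h.comp _ hinj
    simpa [hbdef, Function.comp_def] using this
  have hcard : Fintype.card (Fin 3) = Module.finrank ℝ (Fin 3 → ℝ) := by simp
  let B : Module.Basis (Fin 3) ℝ (Fin 3 → ℝ) := basisOfLinearIndependentOfCardEqFinrank hli hcard
  have hB : ∀ j, B j = b j := fun j =>
    congrFun (coe_basisOfLinearIndependentOfCardEqFinrank hli hcard) j
  -- the gradient relations on the edge vectors
  have hgb : ∀ (i : Fin 4) (j : Fin 3), ∑ n, g i n * b j n =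
      (if i = j.succ then (1 : ℝ) else 0) - (if i = 0 then (1 : ℝ) else 0) := by
    intro i j
    simpa [hbdef] using hg i j.succ 0
  -- the map v ↦ ∑ i (gᵢ·v) aᵢ is the identity
  let L1 : (Fin 3 → ℝ) →ₗ[ℝ] (Fin 3 → ℝ) :=
    { toFun := fun v => ∑ i : Fin 4, (∑ n, g i n * v n) • a i
      map_add' := by
        intro x y
        simp [mul_add, Finset.sum_add_distrib, add_smul]
      map_smul' := by
        intro c x
        simp only [RingHom.id_apply, Pi.smul_apply, smul_eq_mul, Finset.smul_sum, smul_smul]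
        apply Finset.sum_congr rfl; intro i _
        congr 1
        rw [Finset.mul_sum]
        apply Finset.sum_congr rfl; intro n _
        ring }
  have hL1 : L1 = LinearMap.id := by
    apply B.ext
    intro j
    rw [hB]
    show ∑ i : Fin 4, (∑ n, g i n * b j n) • a i = b j
    simp only [hgb]
    simp [sub_smul, Finset.sum_sub_distrib, ite_smul, Finset.sum_ite_eq', hbdef]
  have HM : ∀ v : Fin 3 → ℝ, ∑ i : Fin 4, (∑ n, g i n * v n) • a i = v := by
    intro v
    exact LinearMap.congr_fun hL1 v
  have HM' : ∀ (v : Fin 3 → ℝ) (m : Fin 3),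
      ∑ i : Fin 4, (∑ n, g i n * v n) * a i m = v m := by
    intro v m
    have := congrFun (HM v) m
    simpa [Finset.sum_apply] using this
  -- matrix identity: ∑ i gᵢₙ aᵢₘ = δₙₘ
  have Hmat : ∀ n m : Fin 3, ∑ i : Fin 4, g i n * a i m = if n = m then (1 : ℝ) else 0 := by
    intro n m
    have := HM' (Pi.single n 1 : Fin 3 → ℝ) m
    have e1 : ∀ i : Fin 4, (∑ n', g i n' * (Pi.single n (1 : ℝ) : Fin 3 → ℝ) n') = g i n := by
      intro i
      simp [Pi.single_apply, mul_ite, Finset.sum_ite_eq']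
    rw [Finset.sum_congr rfl (fun i _ => by rw [e1 i])] at this
    rw [this]
    simp [Pi.single_apply, eq_comm]
  -- transpose identity, applied to w
  have HN' : ∀ m : Fin 3, ∑ i : Fin 4, (∑ n, w n * a i n) * g i m = w m := by
    intro m
    have e : ∀ i : Fin 4, (∑ n, w n * a i n) * g i m = ∑ n, (g i m * a i n) * w n := by
      intro i
      rw [Finset.sum_mul]
      apply Finset.sum_congr rfl; intro n _; ring
    simp only [e]
    rw [Finset.sum_comm]
    have : ∀ n : Fin 3, ∑ i : Fin 4, (g i m * a i n) * w n = (if m = n then (1:ℝ) else 0) * w n := by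
      intro n
      rw [← Finset.sum_mul, Hmat m n]
    simp only [this]
    simp [ite_mul, Finset.sum_ite_eq]
  -- ∑ i g i = 0
  have Hs : ∀ m : Fin 3, ∑ i : Fin 4, g i m = 0 := by
    let ℓ : (Fin 3 → ℝ) →ₗ[ℝ] ℝ :=
      { toFun := fun v => ∑ i : Fin 4, ∑ n, g i n * v n
        map_add' := by
          intro x y
          simp [mul_add, Finset.sum_add_distrib]
        map_smul' := by
          intro c x
          simp only [RingHom.id_apply, Pi.smul_apply, smul_eq_mul, Finset.mul_sum]
          apply Finset.sum_congr rfl; intro i _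
          apply Finset.sum_congr rfl; intro n _
          ring }
    have hℓ : ℓ = 0 := by
      apply B.ext
      intro j
      rw [hB]
      show ∑ i : Fin 4, ∑ n, g i n * b j n = 0
      simp only [hgb]
      simp [Finset.sum_sub_distrib, Finset.sum_ite_eq']
    intro m
    have : (∑ i : Fin 4, ∑ n, g i n * (Pi.single m (1 : ℝ) : Fin 3 → ℝ) n) = 0 :=
      LinearMap.congr_fun hℓ (Pi.single m 1 : Fin 3 → ℝ)
    have e1 : ∀ i : Fin 4, (∑ n, g i n * (Pi.single m (1 : ℝ) : Fin 3 → ℝ) n) = g i m := by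
      intro i
      simp [Pi.single_apply, mul_ite, Finset.sum_ite_eq']
    simpa [e1] using this
  have hGz : ∀ j : Fin 4, ∑ i : Fin 4, ∑ n, g i n * g j n = 0 := by
    intro j
    rw [Finset.sum_comm]
    apply Finset.sum_eq_zero
    intro n _
    rw [← Finset.sum_mul, Hs n, zero_mul]
  have hGz' : ∀ i : Fin 4, ∑ j : Fin 4, ∑ n, g i n * g j n = 0 := by
    intro i
    rw [Finset.sum_comm]
    apply Finset.sum_eq_zero
    intro n _
    rw [← Finset.mul_sum, Hs n, mul_zero]
  -- now the main computation, coordinatewise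
  funext m
  simp only [Finset.sum_apply, ite_apply, Pi.zero_apply, Pi.smul_apply, Pi.sub_apply,
    smul_eq_mul]
  set f : Fin 4 → Fin 4 → ℝ := fun i j =>
    (-(∑ n, g i n * g j n) * ∑ n, w n * (a j n - a i n)) * (a j m - a i m) with hfdef
  have hsym : ∀ i j, f j i = f i j := by
    intro i j
    simp only [hfdef]
    have e1 : (∑ n, g j n * g i n) = ∑ n, g i n * g j n := by
      apply Finset.sum_congr rfl; intros; ring
    have e2 : (∑ n, w n * (a i n - a j n)) = -(∑ n, w n * (a j n - a i n)) := by
      rw [eq_neg_iff_add_eq_zero, ← Finset.sum_add_distrib]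
      apply Finset.sum_eq_zero; intros; ring
    rw [e1, e2]; ring
  have hdiag : ∀ i, f i i = 0 := by
    intro i; simp [hfdef]
  have half := half_sum_aux f hsym hdiag
  -- the full double sum equals 2 * w m
  have inner2 : ∀ i : Fin 4,
      ∑ j : Fin 4, (∑ n, g i n * g j n) * (∑ n, w n * a j n) = ∑ n, g i n * w n := by
    intro i
    have e : ∀ j : Fin 4, (∑ n, g i n * g j n) * (∑ n', w n' * a j n')
        = ∑ n, g i n * ((∑ n', w n' * a j n') * g j n) := by
      intro j
      rw [Finset.sum_mul]
      apply Finset.sum_congr rfl; intros; ring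
    simp only [e]
    rw [Finset.sum_comm]
    apply Finset.sum_congr rfl
    intro n _
    rw [← Finset.mul_sum, HN' n]
  have S1 : ∑ i : Fin 4, ∑ j : Fin 4,
      (∑ n, g i n * g j n) * ((∑ n, w n * a j n) * a j m) = 0 := by
    rw [Finset.sum_comm]
    apply Finset.sum_eq_zero
    intro j _
    rw [← Finset.sum_mul, hGz j, zero_mul]
  have S4 : ∑ i : Fin 4, ∑ j : Fin 4,
      (∑ n, g i n * g j n) * ((∑ n, w n * a i n) * a i m) = 0 := by
    apply Finset.sum_eq_zero
    intro i _
    rw [← Finset.sum_mul, hGz' i, zero_mul]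
  have S2 : ∑ i : Fin 4, ∑ j : Fin 4,
      ((∑ n, g i n * g j n) * (∑ n, w n * a j n)) * a i m = w m := by
    have e : ∀ i : Fin 4, ∑ j : Fin 4, ((∑ n, g i n * g j n) * (∑ n, w n * a j n)) * a i m
        = (∑ n, g i n * w n) * a i m := by
      intro i
      rw [← Finset.sum_mul, inner2 i]
    simp only [e]
    exact HM' w m
  have S3 : ∑ i : Fin 4, ∑ j : Fin 4,
      ((∑ n, g i n * g j n) * (∑ n, w n * a i n)) * a j m = w m := by
    rw [Finset.sum_comm]
    have e : ∀ j i : Fin 4, ((∑ n, g i n * g j n) * (∑ n, w n * a i n)) * a j m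
        = ((∑ n, g j n * g i n) * (∑ n, w n * a i n)) * a j m := by
      intro j i
      congr 2
      apply Finset.sum_congr rfl; intros; ring
    calc ∑ j : Fin 4, ∑ i : Fin 4, ((∑ n, g i n * g j n) * (∑ n, w n * a i n)) * a j m
        = ∑ j : Fin 4, ∑ i : Fin 4, ((∑ n, g j n * g i n) * (∑ n, w n * a i n)) * a j m := by
          apply Finset.sum_congr rfl; intro j _
          apply Finset.sum_congr rfl; intro i _
          exact e j i
      _ = w m := S2
  have main : ∑ i : Fin 4, ∑ j : Fin 4, f i j = 2 * w m := by
    have expand : ∀ i j : Fin 4, f i j =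
        -((∑ n, g i n * g j n) * ((∑ n, w n * a j n) * a j m))
          + ((∑ n, g i n * g j n) * (∑ n, w n * a j n)) * a i m
          + ((∑ n, g i n * g j n) * (∑ n, w n * a i n)) * a j m
          - (∑ n, g i n * g j n) * ((∑ n, w n * a i n) * a i m) := by
      intro i j
      have e : (∑ n, w n * (a j n - a i n))
          = (∑ n, w n * a j n) - (∑ n, w n * a i n) := by
        rw [← Finset.sum_sub_distrib]
        apply Finset.sum_congr rfl; intros; ring
      simp only [hfdef, e]
      ring
    calc ∑ i : Fin 4, ∑ j : Fin 4, f i j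
        = ∑ i : Fin 4, ∑ j : Fin 4,
            (-((∑ n, g i n * g j n) * ((∑ n, w n * a j n) * a j m))
              + ((∑ n, g i n * g j n) * (∑ n, w n * a j n)) * a i m
              + ((∑ n, g i n * g j n) * (∑ n, w n * a i n)) * a j m
              - (∑ n, g i n * g j n) * ((∑ n, w n * a i n) * a i m)) := by
          apply Finset.sum_congr rfl; intro i _
          apply Finset.sum_congr rfl; intro j _
          exact expand i j
      _ = -(∑ i : Fin 4, ∑ j : Fin 4, (∑ n, g i n * g j n) * ((∑ n, w n * a j n) * a j m))
            + (∑ i : Fin 4, ∑ j : Fin 4, ((∑ n, g i n * g j n) * (∑ n, w n * a j n)) * a i m)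
            + (∑ i : Fin 4, ∑ j : Fin 4, ((∑ n, g i n * g j n) * (∑ n, w n * a i n)) * a j m)
            - (∑ i : Fin 4, ∑ j : Fin 4, (∑ n, g i n * g j n) * ((∑ n, w n * a i n) * a i m)) := by
          simp [Finset.sum_add_distrib, Finset.sum_sub_distrib]
      _ = 2 * w m := by rw [S1, S2, S3, S4]; ring
  -- conclude
  have hgoal : (∑ i : Fin 4, ∑ j : Fin 4, if i < j then f i j else 0) = w m := by
    rw [main] at half
    linarith
  calc (∑ i : Fin 4, ∑ j : Fin 4,
        if i < j then (-(∑ n, g i n * g j n) * ∑ n, w n * (a j n - a i n)) * (a j m - a i m)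
        else 0)
      = ∑ i : Fin 4, ∑ j : Fin 4, (if i < j then f i j else 0) := rfl
    _ = w m := hgoal
end

section
/- With a₀,…,a₃, g₀,…,g₃ and V as in the tetrahedron setup, for each ordered pair (i,j) with i ≠ j let {k,l} = {0,1,2,3} ∖ {i,j}. Then both of the following identities of linear maps on ℝ³ hold: ∑_{i ≠ j} (−18 V² ‖g_k × g_l‖²) · (gᵢ ⊗ gⱼ) = Id_{ℝ³} and ∑_{i ≠ j} (−18 V² ‖g_k × g_l‖²) · (gⱼ ⊗ gᵢ) = Id_{ℝ³}. (Lemma 4.9: in the paper's notation this is I = ∑_{F ≠ F'} ω_{FF'}^T (|F||F'|/|T|) n_F n_{F'}ᵀ = ∑_{F ≠ F'} ω_{FF'}^T (|F||F'|/|T|) n_{F'} n_Fᵀ, using that the face Fᵢ opposite vertex aᵢ satisfies |Fᵢ|·n_{Fᵢ} = −3V·gᵢ for its outward unit normal n_{Fᵢ} and area |Fᵢ|, and ω_{FᵢFⱼ}^T = −½‖curl φ_{kl}‖²_{L²(T)} = −2V‖g_k × g_l‖² where φ_{kl} is the Nédélec basis function of the common edge of Fᵢ and Fⱼ.) -/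
set_option maxHeartbeats 1600000


/-- The cross product on `ℝ³`. -/
def cross3 (a b : Fin 3 → ℝ) : Fin 3 → ℝ :=
  ![a 1 * b 2 - a 2 * b 1, a 2 * b 0 - a 0 * b 2, a 0 * b 1 - a 1 * b 0]

/-- Lemma 4.9: for a nondegenerate tetrahedron with vertices `a 0, …, a 3`,
barycentric gradients `g 0, …, g 3` (characterized by `⟨g i, a j − a k⟩ = δᵢⱼ − δᵢₖ`)
and volume `V = |det(a₁−a₀, a₂−a₀, a₃−a₀)|/6`, for each ordered pair `(i,j)` with
`i ≠ j` let `{k,l}` be the complementary pair (encoded by a function `kl` so that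
`{i, j, (kl i j).1, (kl i j).2} = {0,1,2,3}`).  Then
`∑_{i≠j} (−18 V² ‖g_k × g_l‖²) gᵢ gⱼᵀ = I = ∑_{i≠j} (−18 V² ‖g_k × g_l‖²) gⱼ gᵢᵀ`
as linear maps (matrices) on `ℝ³`, where `v ⊗ w` is realized by the rank-one matrix
`Matrix.vecMulVec v w`, whose action is `x ↦ ⟨w, x⟩ · v`. -/
theorem stmt_6 (a : Fin 4 → Fin 3 → ℝ) (g : Fin 4 → Fin 3 → ℝ)
    (ha : AffineIndependent ℝ a)
    (hg : ∀ i j k : Fin 4, ∑ m, g i m * (a j m - a k m) =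
      (if i = j then (1 : ℝ) else 0) - (if i = k then (1 : ℝ) else 0))
    (V : ℝ)
    (hV : V = |(Matrix.of fun (r : Fin 3) (c : Fin 3) => a r.succ c - a 0 c).det| / 6)
    (kl : Fin 4 → Fin 4 → Fin 4 × Fin 4)
    (hkl : ∀ i j : Fin 4, i ≠ j →
      ({i, j, (kl i j).1, (kl i j).2} : Finset (Fin 4)) = Finset.univ) :
    (∑ i : Fin 4, ∑ j : Fin 4,
        if i ≠ j then
          (-(18 * V ^ 2 * ∑ m, (cross3 (g (kl i j).1) (g (kl i j).2)) m ^ 2)) •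
            Matrix.vecMulVec (g i) (g j)
        else 0) = (1 : Matrix (Fin 3) (Fin 3) ℝ) ∧
    (∑ i : Fin 4, ∑ j : Fin 4,
        if i ≠ j then
          (-(18 * V ^ 2 * ∑ m, (cross3 (g (kl i j).1) (g (kl i j).2)) m ^ 2)) •
            Matrix.vecMulVec (g j) (g i)
        else 0) = (1 : Matrix (Fin 3) (Fin 3) ℝ) := by
  classical
  set Mm : Matrix (Fin 3) (Fin 3) ℝ := Matrix.of fun (r : Fin 3) (c : Fin 3) => a r.succ c - a 0 c with hMm
  set Gm : Matrix (Fin 3) (Fin 3) ℝ := Matrix.of fun (r : Fin 3) (c : Fin 3) => g r.succ c with hGm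
  have hGM : Gm * Mm.transpose = 1 := by
    ext r c
    rw [Matrix.mul_apply]
    simp only [hGm, hMm, Matrix.of_apply, Matrix.transpose_apply]
    rw [hg r.succ c.succ 0]
    simp [Fin.succ_inj, Fin.succ_ne_zero, Matrix.one_apply]
  have hMG : Mm.transpose * Gm = 1 := mul_eq_one_comm.mp hGM
  have hE : ∀ r c : Fin 3, (a 1 r - a 0 r) * g 1 c + (a 2 r - a 0 r) * g 2 c + (a 3 r - a 0 r) * g 3 c
      = if r = c then 1 else 0 := by
    intro r c
    have h := congrFun (congrFun hMG r) c
    simpa [Matrix.mul_apply, hMm, hGm, Fin.sum_univ_three, Matrix.one_apply,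
      show (Fin.succ 0 : Fin 4) = 1 from rfl, show (Fin.succ 1 : Fin 4) = 2 from rfl,
      show (Fin.succ 2 : Fin 4) = 3 from rfl] using h
  have hdet1 : Gm.det * Mm.det = 1 := by
    rw [← Matrix.det_transpose Mm, ← Matrix.det_mul, hGM, Matrix.det_one]
  have hdetG : Gm.det = g 1 0 * (g 2 1 * g 3 2 - g 2 2 * g 3 1)
      - g 1 1 * (g 2 0 * g 3 2 - g 2 2 * g 3 0) + g 1 2 * (g 2 0 * g 3 1 - g 2 1 * g 3 0) := by
    rw [Matrix.det_fin_three]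
    simp only [hGm, Matrix.of_apply, show (Fin.succ 0 : Fin 4) = 1 from rfl,
      show (Fin.succ 1 : Fin 4) = 2 from rfl, show (Fin.succ 2 : Fin 4) = 3 from rfl]
    ring
  rw [hdetG] at hdet1
  have E00 : (a 1 0 - a 0 0) * g 1 0 + (a 2 0 - a 0 0) * g 2 0 + (a 3 0 - a 0 0) * g 3 0 = 1 := by simpa using hE 0 0
  have E01 : (a 1 0 - a 0 0) * g 1 1 + (a 2 0 - a 0 0) * g 2 1 + (a 3 0 - a 0 0) * g 3 1 = 0 := by simpa using hE 0 1
  have E02 : (a 1 0 - a 0 0) * g 1 2 + (a 2 0 - a 0 0) * g 2 2 + (a 3 0 - a 0 0) * g 3 2 = 0 := by simpa using hE 0 2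
  have E10 : (a 1 1 - a 0 1) * g 1 0 + (a 2 1 - a 0 1) * g 2 0 + (a 3 1 - a 0 1) * g 3 0 = 0 := by simpa using hE 1 0
  have E11 : (a 1 1 - a 0 1) * g 1 1 + (a 2 1 - a 0 1) * g 2 1 + (a 3 1 - a 0 1) * g 3 1 = 1 := by simpa using hE 1 1
  have E12 : (a 1 1 - a 0 1) * g 1 2 + (a 2 1 - a 0 1) * g 2 2 + (a 3 1 - a 0 1) * g 3 2 = 0 := by simpa using hE 1 2
  have E20 : (a 1 2 - a 0 2) * g 1 0 + (a 2 2 - a 0 2) * g 2 0 + (a 3 2 - a 0 2) * g 3 0 = 0 := by simpa using hE 2 0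
  have E21 : (a 1 2 - a 0 2) * g 1 1 + (a 2 2 - a 0 2) * g 2 1 + (a 3 2 - a 0 2) * g 3 1 = 0 := by simpa using hE 2 1
  have E22 : (a 1 2 - a 0 2) * g 1 2 + (a 2 2 - a 0 2) * g 2 2 + (a 3 2 - a 0 2) * g 3 2 = 1 := by simpa using hE 2 2
  have Hg01 := hg 0 1 0
  simp [Fin.sum_univ_three] at Hg01
  have Hg02 := hg 0 2 0
  simp [Fin.sum_univ_three] at Hg02
  have Hg03 := hg 0 3 0
  simp [Fin.sum_univ_three] at Hg03
  have Hg11 := hg 1 1 0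
  simp [Fin.sum_univ_three] at Hg11
  have Hg12 := hg 1 2 0
  simp [Fin.sum_univ_three] at Hg12
  have Hg13 := hg 1 3 0
  simp [Fin.sum_univ_three] at Hg13
  have Hg21 := hg 2 1 0
  simp [Fin.sum_univ_three] at Hg21
  have Hg22 := hg 2 2 0
  simp [Fin.sum_univ_three] at Hg22
  have Hg23 := hg 2 3 0
  simp [Fin.sum_univ_three] at Hg23
  have Hg31 := hg 3 1 0
  simp [Fin.sum_univ_three] at Hg31
  have Hg32 := hg 3 2 0
  simp [Fin.sum_univ_three] at Hg32
  have Hg33 := hg 3 3 0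
  simp [Fin.sum_univ_three] at Hg33
  have S0 : g 0 0 + g 1 0 + g 2 0 + g 3 0 = 0 := by
    linear_combination (-(g 0 0 + g 1 0 + g 2 0 + g 3 0)) * E00 + (-(g 0 1 + g 1 1 + g 2 1 + g 3 1)) * E10 + (-(g 0 2 + g 1 2 + g 2 2 + g 3 2)) * E20 + g 1 0 * (Hg01 + Hg11 + Hg21 + Hg31) + g 2 0 * (Hg02 + Hg12 + Hg22 + Hg32) + g 3 0 * (Hg03 + Hg13 + Hg23 + Hg33)
  have S1 : g 0 1 + g 1 1 + g 2 1 + g 3 1 = 0 := by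
    linear_combination (-(g 0 0 + g 1 0 + g 2 0 + g 3 0)) * E01 + (-(g 0 1 + g 1 1 + g 2 1 + g 3 1)) * E11 + (-(g 0 2 + g 1 2 + g 2 2 + g 3 2)) * E21 + g 1 1 * (Hg01 + Hg11 + Hg21 + Hg31) + g 2 1 * (Hg02 + Hg12 + Hg22 + Hg32) + g 3 1 * (Hg03 + Hg13 + Hg23 + Hg33)
  have S2 : g 0 2 + g 1 2 + g 2 2 + g 3 2 = 0 := by
    linear_combination (-(g 0 0 + g 1 0 + g 2 0 + g 3 0)) * E02 + (-(g 0 1 + g 1 1 + g 2 1 + g 3 1)) * E12 + (-(g 0 2 + g 1 2 + g 2 2 + g 3 2)) * E22 + g 1 2 * (Hg01 + Hg11 + Hg21 + Hg31) + g 2 2 * (Hg02 + Hg12 + Hg22 + Hg32) + g 3 2 * (Hg03 + Hg13 + Hg23 + Hg33)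
  have P00 : g 0 0 * a 0 0 + g 1 0 * a 1 0 + g 2 0 * a 2 0 + g 3 0 * a 3 0 = 1 := by
    linear_combination E00 + a 0 0 * S0
  have P01 : g 0 0 * a 0 1 + g 1 0 * a 1 1 + g 2 0 * a 2 1 + g 3 0 * a 3 1 = 0 := by
    linear_combination E10 + a 0 1 * S0
  have P02 : g 0 0 * a 0 2 + g 1 0 * a 1 2 + g 2 0 * a 2 2 + g 3 0 * a 3 2 = 0 := by
    linear_combination E20 + a 0 2 * S0
  have P10 : g 0 1 * a 0 0 + g 1 1 * a 1 0 + g 2 1 * a 2 0 + g 3 1 * a 3 0 = 0 := by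
    linear_combination E01 + a 0 0 * S1
  have P11 : g 0 1 * a 0 1 + g 1 1 * a 1 1 + g 2 1 * a 2 1 + g 3 1 * a 3 1 = 1 := by
    linear_combination E11 + a 0 1 * S1
  have P12 : g 0 1 * a 0 2 + g 1 1 * a 1 2 + g 2 1 * a 2 2 + g 3 1 * a 3 2 = 0 := by
    linear_combination E21 + a 0 2 * S1
  have P20 : g 0 2 * a 0 0 + g 1 2 * a 1 0 + g 2 2 * a 2 0 + g 3 2 * a 3 0 = 0 := by
    linear_combination E02 + a 0 0 * S2
  have P21 : g 0 2 * a 0 1 + g 1 2 * a 1 1 + g 2 2 * a 2 1 + g 3 2 * a 3 1 = 0 := by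
    linear_combination E12 + a 0 1 * S2
  have P22 : g 0 2 * a 0 2 + g 1 2 * a 1 2 + g 2 2 * a 2 2 + g 3 2 * a 3 2 = 1 := by
    linear_combination E22 + a 0 2 * S2
  have C12_0 : Mm.det * (g 1 1 * g 2 2 - g 1 2 * g 2 1) = (a 3 0 - a 0 0) := by
    linear_combination (-(Mm.det)) * ((g 1 1 * g 2 2 - g 1 2 * g 2 1) * E00 + (g 1 2 * g 2 0 - g 1 0 * g 2 2) * E01 + (g 1 0 * g 2 1 - g 1 1 * g 2 0) * E02) + (a 3 0 - a 0 0) * hdet1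
  have C12_1 : Mm.det * (g 1 2 * g 2 0 - g 1 0 * g 2 2) = (a 3 1 - a 0 1) := by
    linear_combination (-(Mm.det)) * ((g 1 1 * g 2 2 - g 1 2 * g 2 1) * E10 + (g 1 2 * g 2 0 - g 1 0 * g 2 2) * E11 + (g 1 0 * g 2 1 - g 1 1 * g 2 0) * E12) + (a 3 1 - a 0 1) * hdet1
  have C12_2 : Mm.det * (g 1 0 * g 2 1 - g 1 1 * g 2 0) = (a 3 2 - a 0 2) := by
    linear_combination (-(Mm.det)) * ((g 1 1 * g 2 2 - g 1 2 * g 2 1) * E20 + (g 1 2 * g 2 0 - g 1 0 * g 2 2) * E21 + (g 1 0 * g 2 1 - g 1 1 * g 2 0) * E22) + (a 3 2 - a 0 2) * hdet1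
  have C23_0 : Mm.det * (g 2 1 * g 3 2 - g 2 2 * g 3 1) = (a 1 0 - a 0 0) := by
    linear_combination (-(Mm.det)) * ((g 2 1 * g 3 2 - g 2 2 * g 3 1) * E00 + (g 2 2 * g 3 0 - g 2 0 * g 3 2) * E01 + (g 2 0 * g 3 1 - g 2 1 * g 3 0) * E02) + (a 1 0 - a 0 0) * hdet1
  have C23_1 : Mm.det * (g 2 2 * g 3 0 - g 2 0 * g 3 2) = (a 1 1 - a 0 1) := by
    linear_combination (-(Mm.det)) * ((g 2 1 * g 3 2 - g 2 2 * g 3 1) * E10 + (g 2 2 * g 3 0 - g 2 0 * g 3 2) * E11 + (g 2 0 * g 3 1 - g 2 1 * g 3 0) * E12) + (a 1 1 - a 0 1) * hdet1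
  have C23_2 : Mm.det * (g 2 0 * g 3 1 - g 2 1 * g 3 0) = (a 1 2 - a 0 2) := by
    linear_combination (-(Mm.det)) * ((g 2 1 * g 3 2 - g 2 2 * g 3 1) * E20 + (g 2 2 * g 3 0 - g 2 0 * g 3 2) * E21 + (g 2 0 * g 3 1 - g 2 1 * g 3 0) * E22) + (a 1 2 - a 0 2) * hdet1
  have C31_0 : Mm.det * (g 3 1 * g 1 2 - g 3 2 * g 1 1) = (a 2 0 - a 0 0) := by
    linear_combination (-(Mm.det)) * ((g 3 1 * g 1 2 - g 3 2 * g 1 1) * E00 + (g 3 2 * g 1 0 - g 3 0 * g 1 2) * E01 + (g 3 0 * g 1 1 - g 3 1 * g 1 0) * E02) + (a 2 0 - a 0 0) * hdet1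
  have C31_1 : Mm.det * (g 3 2 * g 1 0 - g 3 0 * g 1 2) = (a 2 1 - a 0 1) := by
    linear_combination (-(Mm.det)) * ((g 3 1 * g 1 2 - g 3 2 * g 1 1) * E10 + (g 3 2 * g 1 0 - g 3 0 * g 1 2) * E11 + (g 3 0 * g 1 1 - g 3 1 * g 1 0) * E12) + (a 2 1 - a 0 1) * hdet1
  have C31_2 : Mm.det * (g 3 0 * g 1 1 - g 3 1 * g 1 0) = (a 2 2 - a 0 2) := by
    linear_combination (-(Mm.det)) * ((g 3 1 * g 1 2 - g 3 2 * g 1 1) * E20 + (g 3 2 * g 1 0 - g 3 0 * g 1 2) * E21 + (g 3 0 * g 1 1 - g 3 1 * g 1 0) * E22) + (a 2 2 - a 0 2) * hdet1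
  have C01_0 : Mm.det * (g 0 1 * g 1 2 - g 0 2 * g 1 1) = (a 3 0 - a 2 0) := by
    linear_combination Mm.det * (g 1 2 * S1 - g 1 1 * S2) + C12_0 - C31_0
  have C01_1 : Mm.det * (g 0 2 * g 1 0 - g 0 0 * g 1 2) = (a 3 1 - a 2 1) := by
    linear_combination Mm.det * (g 1 0 * S2 - g 1 2 * S0) + C12_1 - C31_1
  have C01_2 : Mm.det * (g 0 0 * g 1 1 - g 0 1 * g 1 0) = (a 3 2 - a 2 2) := by
    linear_combination Mm.det * (g 1 1 * S0 - g 1 0 * S1) + C12_2 - C31_2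
  have C02_0 : Mm.det * (g 0 1 * g 2 2 - g 0 2 * g 2 1) = (a 1 0 - a 3 0) := by
    linear_combination Mm.det * (g 2 2 * S1 - g 2 1 * S2) + - C12_0 + C23_0
  have C02_1 : Mm.det * (g 0 2 * g 2 0 - g 0 0 * g 2 2) = (a 1 1 - a 3 1) := by
    linear_combination Mm.det * (g 2 0 * S2 - g 2 2 * S0) + - C12_1 + C23_1
  have C02_2 : Mm.det * (g 0 0 * g 2 1 - g 0 1 * g 2 0) = (a 1 2 - a 3 2) := by
    linear_combination Mm.det * (g 2 1 * S0 - g 2 0 * S1) + - C12_2 + C23_2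
  have C03_0 : Mm.det * (g 0 1 * g 3 2 - g 0 2 * g 3 1) = (a 2 0 - a 1 0) := by
    linear_combination Mm.det * (g 3 2 * S1 - g 3 1 * S2) + C31_0 - C23_0
  have C03_1 : Mm.det * (g 0 2 * g 3 0 - g 0 0 * g 3 2) = (a 2 1 - a 1 1) := by
    linear_combination Mm.det * (g 3 0 * S2 - g 3 2 * S0) + C31_1 - C23_1
  have C03_2 : Mm.det * (g 0 0 * g 3 1 - g 0 1 * g 3 0) = (a 2 2 - a 1 2) := by
    linear_combination Mm.det * (g 3 1 * S0 - g 3 0 * S1) + C31_2 - C23_2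
  have B12 : Mm.det ^ 2 * ((g 1 1 * g 2 2 - g 1 2 * g 2 1) ^ 2 + (g 1 2 * g 2 0 - g 1 0 * g 2 2) ^ 2 + (g 1 0 * g 2 1 - g 1 1 * g 2 0) ^ 2) = (a 3 0 - a 0 0) ^ 2 + (a 3 1 - a 0 1) ^ 2 + (a 3 2 - a 0 2) ^ 2 := by
    linear_combination (Mm.det * (g 1 1 * g 2 2 - g 1 2 * g 2 1) + (a 3 0 - a 0 0)) * C12_0 + (Mm.det * (g 1 2 * g 2 0 - g 1 0 * g 2 2) + (a 3 1 - a 0 1)) * C12_1 + (Mm.det * (g 1 0 * g 2 1 - g 1 1 * g 2 0) + (a 3 2 - a 0 2)) * C12_2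
  have B23 : Mm.det ^ 2 * ((g 2 1 * g 3 2 - g 2 2 * g 3 1) ^ 2 + (g 2 2 * g 3 0 - g 2 0 * g 3 2) ^ 2 + (g 2 0 * g 3 1 - g 2 1 * g 3 0) ^ 2) = (a 1 0 - a 0 0) ^ 2 + (a 1 1 - a 0 1) ^ 2 + (a 1 2 - a 0 2) ^ 2 := by
    linear_combination (Mm.det * (g 2 1 * g 3 2 - g 2 2 * g 3 1) + (a 1 0 - a 0 0)) * C23_0 + (Mm.det * (g 2 2 * g 3 0 - g 2 0 * g 3 2) + (a 1 1 - a 0 1)) * C23_1 + (Mm.det * (g 2 0 * g 3 1 - g 2 1 * g 3 0) + (a 1 2 - a 0 2)) * C23_2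
  have B31 : Mm.det ^ 2 * ((g 3 1 * g 1 2 - g 3 2 * g 1 1) ^ 2 + (g 3 2 * g 1 0 - g 3 0 * g 1 2) ^ 2 + (g 3 0 * g 1 1 - g 3 1 * g 1 0) ^ 2) = (a 2 0 - a 0 0) ^ 2 + (a 2 1 - a 0 1) ^ 2 + (a 2 2 - a 0 2) ^ 2 := by
    linear_combination (Mm.det * (g 3 1 * g 1 2 - g 3 2 * g 1 1) + (a 2 0 - a 0 0)) * C31_0 + (Mm.det * (g 3 2 * g 1 0 - g 3 0 * g 1 2) + (a 2 1 - a 0 1)) * C31_1 + (Mm.det * (g 3 0 * g 1 1 - g 3 1 * g 1 0) + (a 2 2 - a 0 2)) * C31_2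
  have B01 : Mm.det ^ 2 * ((g 0 1 * g 1 2 - g 0 2 * g 1 1) ^ 2 + (g 0 2 * g 1 0 - g 0 0 * g 1 2) ^ 2 + (g 0 0 * g 1 1 - g 0 1 * g 1 0) ^ 2) = (a 3 0 - a 2 0) ^ 2 + (a 3 1 - a 2 1) ^ 2 + (a 3 2 - a 2 2) ^ 2 := by
    linear_combination (Mm.det * (g 0 1 * g 1 2 - g 0 2 * g 1 1) + (a 3 0 - a 2 0)) * C01_0 + (Mm.det * (g 0 2 * g 1 0 - g 0 0 * g 1 2) + (a 3 1 - a 2 1)) * C01_1 + (Mm.det * (g 0 0 * g 1 1 - g 0 1 * g 1 0) + (a 3 2 - a 2 2)) * C01_2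
  have B02 : Mm.det ^ 2 * ((g 0 1 * g 2 2 - g 0 2 * g 2 1) ^ 2 + (g 0 2 * g 2 0 - g 0 0 * g 2 2) ^ 2 + (g 0 0 * g 2 1 - g 0 1 * g 2 0) ^ 2) = (a 1 0 - a 3 0) ^ 2 + (a 1 1 - a 3 1) ^ 2 + (a 1 2 - a 3 2) ^ 2 := by
    linear_combination (Mm.det * (g 0 1 * g 2 2 - g 0 2 * g 2 1) + (a 1 0 - a 3 0)) * C02_0 + (Mm.det * (g 0 2 * g 2 0 - g 0 0 * g 2 2) + (a 1 1 - a 3 1)) * C02_1 + (Mm.det * (g 0 0 * g 2 1 - g 0 1 * g 2 0) + (a 1 2 - a 3 2)) * C02_2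
  have B03 : Mm.det ^ 2 * ((g 0 1 * g 3 2 - g 0 2 * g 3 1) ^ 2 + (g 0 2 * g 3 0 - g 0 0 * g 3 2) ^ 2 + (g 0 0 * g 3 1 - g 0 1 * g 3 0) ^ 2) = (a 2 0 - a 1 0) ^ 2 + (a 2 1 - a 1 1) ^ 2 + (a 2 2 - a 1 2) ^ 2 := by
    linear_combination (Mm.det * (g 0 1 * g 3 2 - g 0 2 * g 3 1) + (a 2 0 - a 1 0)) * C03_0 + (Mm.det * (g 0 2 * g 3 0 - g 0 0 * g 3 2) + (a 2 1 - a 1 1)) * C03_1 + (Mm.det * (g 0 0 * g 3 1 - g 0 1 * g 3 0) + (a 2 2 - a 1 2)) * C03_2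
  have hcr : ∀ i j : Fin 4, i ≠ j →
      Mm.det ^ 2 * (∑ m, (cross3 (g (kl i j).1) (g (kl i j).2)) m ^ 2) = ∑ p, (a i p - a j p) ^ 2 := by
    intro i j hij
    have hklv := hkl i j hij
    rcases hpq : kl i j with ⟨k, l⟩
    rw [hpq] at hklv
    simp only [cross3, Fin.sum_univ_three, Matrix.cons_val_zero, Matrix.cons_val_one,
      Matrix.head_cons, Matrix.cons_val_two, Matrix.tail_cons]
    fin_cases i <;> fin_cases j
    · exact absurd rfl hij
    · simp only [show (⟨0, by norm_num⟩ : Fin 4) = 0 from rfl, show (⟨1, by norm_num⟩ : Fin 4) = 1 from rfl, show (⟨2, by norm_num⟩ : Fin 4) = 2 from rfl, show (⟨3, by norm_num⟩ : Fin 4) = 3 from rfl] at hklv ⊢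
      have hc : (k = 2 ∧ l = 3) ∨ (k = 3 ∧ l = 2) := by
        fin_cases k <;> fin_cases l <;> revert hklv <;> decide
      rcases hc with ⟨rfl, rfl⟩ | ⟨rfl, rfl⟩ <;> linear_combination B23
    · simp only [show (⟨0, by norm_num⟩ : Fin 4) = 0 from rfl, show (⟨1, by norm_num⟩ : Fin 4) = 1 from rfl, show (⟨2, by norm_num⟩ : Fin 4) = 2 from rfl, show (⟨3, by norm_num⟩ : Fin 4) = 3 from rfl] at hklv ⊢
      have hc : (k = 1 ∧ l = 3) ∨ (k = 3 ∧ l = 1) := by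
        fin_cases k <;> fin_cases l <;> revert hklv <;> decide
      rcases hc with ⟨rfl, rfl⟩ | ⟨rfl, rfl⟩ <;> linear_combination B31
    · simp only [show (⟨0, by norm_num⟩ : Fin 4) = 0 from rfl, show (⟨1, by norm_num⟩ : Fin 4) = 1 from rfl, show (⟨2, by norm_num⟩ : Fin 4) = 2 from rfl, show (⟨3, by norm_num⟩ : Fin 4) = 3 from rfl] at hklv ⊢
      have hc : (k = 1 ∧ l = 2) ∨ (k = 2 ∧ l = 1) := by
        fin_cases k <;> fin_cases l <;> revert hklv <;> decide
      rcases hc with ⟨rfl, rfl⟩ | ⟨rfl, rfl⟩ <;> linear_combination B12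
    · simp only [show (⟨0, by norm_num⟩ : Fin 4) = 0 from rfl, show (⟨1, by norm_num⟩ : Fin 4) = 1 from rfl, show (⟨2, by norm_num⟩ : Fin 4) = 2 from rfl, show (⟨3, by norm_num⟩ : Fin 4) = 3 from rfl] at hklv ⊢
      have hc : (k = 2 ∧ l = 3) ∨ (k = 3 ∧ l = 2) := by
        fin_cases k <;> fin_cases l <;> revert hklv <;> decide
      rcases hc with ⟨rfl, rfl⟩ | ⟨rfl, rfl⟩ <;> linear_combination B23
    · exact absurd rfl hij
    · simp only [show (⟨0, by norm_num⟩ : Fin 4) = 0 from rfl, show (⟨1, by norm_num⟩ : Fin 4) = 1 from rfl, show (⟨2, by norm_num⟩ : Fin 4) = 2 from rfl, show (⟨3, by norm_num⟩ : Fin 4) = 3 from rfl] at hklv ⊢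
      have hc : (k = 0 ∧ l = 3) ∨ (k = 3 ∧ l = 0) := by
        fin_cases k <;> fin_cases l <;> revert hklv <;> decide
      rcases hc with ⟨rfl, rfl⟩ | ⟨rfl, rfl⟩ <;> linear_combination B03
    · simp only [show (⟨0, by norm_num⟩ : Fin 4) = 0 from rfl, show (⟨1, by norm_num⟩ : Fin 4) = 1 from rfl, show (⟨2, by norm_num⟩ : Fin 4) = 2 from rfl, show (⟨3, by norm_num⟩ : Fin 4) = 3 from rfl] at hklv ⊢
      have hc : (k = 0 ∧ l = 2) ∨ (k = 2 ∧ l = 0) := by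
        fin_cases k <;> fin_cases l <;> revert hklv <;> decide
      rcases hc with ⟨rfl, rfl⟩ | ⟨rfl, rfl⟩ <;> linear_combination B02
    · simp only [show (⟨0, by norm_num⟩ : Fin 4) = 0 from rfl, show (⟨1, by norm_num⟩ : Fin 4) = 1 from rfl, show (⟨2, by norm_num⟩ : Fin 4) = 2 from rfl, show (⟨3, by norm_num⟩ : Fin 4) = 3 from rfl] at hklv ⊢
      have hc : (k = 1 ∧ l = 3) ∨ (k = 3 ∧ l = 1) := by
        fin_cases k <;> fin_cases l <;> revert hklv <;> decide
      rcases hc with ⟨rfl, rfl⟩ | ⟨rfl, rfl⟩ <;> linear_combination B31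
    · simp only [show (⟨0, by norm_num⟩ : Fin 4) = 0 from rfl, show (⟨1, by norm_num⟩ : Fin 4) = 1 from rfl, show (⟨2, by norm_num⟩ : Fin 4) = 2 from rfl, show (⟨3, by norm_num⟩ : Fin 4) = 3 from rfl] at hklv ⊢
      have hc : (k = 0 ∧ l = 3) ∨ (k = 3 ∧ l = 0) := by
        fin_cases k <;> fin_cases l <;> revert hklv <;> decide
      rcases hc with ⟨rfl, rfl⟩ | ⟨rfl, rfl⟩ <;> linear_combination B03
    · exact absurd rfl hij
    · simp only [show (⟨0, by norm_num⟩ : Fin 4) = 0 from rfl, show (⟨1, by norm_num⟩ : Fin 4) = 1 from rfl, show (⟨2, by norm_num⟩ : Fin 4) = 2 from rfl, show (⟨3, by norm_num⟩ : Fin 4) = 3 from rfl] at hklv ⊢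
      have hc : (k = 0 ∧ l = 1) ∨ (k = 1 ∧ l = 0) := by
        fin_cases k <;> fin_cases l <;> revert hklv <;> decide
      rcases hc with ⟨rfl, rfl⟩ | ⟨rfl, rfl⟩ <;> linear_combination B01
    · simp only [show (⟨0, by norm_num⟩ : Fin 4) = 0 from rfl, show (⟨1, by norm_num⟩ : Fin 4) = 1 from rfl, show (⟨2, by norm_num⟩ : Fin 4) = 2 from rfl, show (⟨3, by norm_num⟩ : Fin 4) = 3 from rfl] at hklv ⊢
      have hc : (k = 1 ∧ l = 2) ∨ (k = 2 ∧ l = 1) := by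
        fin_cases k <;> fin_cases l <;> revert hklv <;> decide
      rcases hc with ⟨rfl, rfl⟩ | ⟨rfl, rfl⟩ <;> linear_combination B12
    · simp only [show (⟨0, by norm_num⟩ : Fin 4) = 0 from rfl, show (⟨1, by norm_num⟩ : Fin 4) = 1 from rfl, show (⟨2, by norm_num⟩ : Fin 4) = 2 from rfl, show (⟨3, by norm_num⟩ : Fin 4) = 3 from rfl] at hklv ⊢
      have hc : (k = 0 ∧ l = 2) ∨ (k = 2 ∧ l = 0) := by
        fin_cases k <;> fin_cases l <;> revert hklv <;> decide
      rcases hc with ⟨rfl, rfl⟩ | ⟨rfl, rfl⟩ <;> linear_combination B02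
    · simp only [show (⟨0, by norm_num⟩ : Fin 4) = 0 from rfl, show (⟨1, by norm_num⟩ : Fin 4) = 1 from rfl, show (⟨2, by norm_num⟩ : Fin 4) = 2 from rfl, show (⟨3, by norm_num⟩ : Fin 4) = 3 from rfl] at hklv ⊢
      have hc : (k = 0 ∧ l = 1) ∨ (k = 1 ∧ l = 0) := by
        fin_cases k <;> fin_cases l <;> revert hklv <;> decide
      rcases hc with ⟨rfl, rfl⟩ | ⟨rfl, rfl⟩ <;> linear_combination B01
    · exact absurd rfl hij
  have hV2 : Mm.det ^ 2 = 36 * V ^ 2 := by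
    rw [hV, div_pow, sq_abs]; ring
  have hcoef : ∀ i j : Fin 4, i ≠ j →
      (-(18 * V ^ 2 * ∑ m, (cross3 (g (kl i j).1) (g (kl i j).2)) m ^ 2))
        = -(∑ p, (a i p - a j p) ^ 2) / 2 := by
    intro i j h
    linear_combination ((∑ m, (cross3 (g (kl i j).1) (g (kl i j).2)) m ^ 2) / 2) * hV2
      - (1 / 2 : ℝ) * hcr i j h
  have key1 : ∀ i j : Fin 4,
      (if i ≠ j then
          (-(18 * V ^ 2 * ∑ m, (cross3 (g (kl i j).1) (g (kl i j).2)) m ^ 2)) •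
            Matrix.vecMulVec (g i) (g j)
        else 0)
        = (-(∑ p, (a i p - a j p) ^ 2) / 2) • Matrix.vecMulVec (g i) (g j) := by
    intro i j
    by_cases h : i = j
    · subst h
      rw [if_neg (by simp)]
      have h0 : (∑ p, (a i p - a i p) ^ 2) = 0 := by simp
      rw [h0]
      simp
    · rw [if_pos h, hcoef i j h]
  have key2 : ∀ i j : Fin 4,
      (if i ≠ j then
          (-(18 * V ^ 2 * ∑ m, (cross3 (g (kl i j).1) (g (kl i j).2)) m ^ 2)) •
            Matrix.vecMulVec (g j) (g i)
        else 0)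
        = (-(∑ p, (a i p - a j p) ^ 2) / 2) • Matrix.vecMulVec (g j) (g i) := by
    intro i j
    by_cases h : i = j
    · subst h
      rw [if_neg (by simp)]
      have h0 : (∑ p, (a i p - a i p) ^ 2) = 0 := by simp
      rw [h0]
      simp
    · rw [if_pos h, hcoef i j h]
  -- part 1
  constructor
  · simp only [key1]
    ext m n
    simp only [Matrix.sum_apply, Matrix.add_apply, Matrix.smul_apply, Matrix.vecMulVec_apply, smul_eq_mul,
      Fin.sum_univ_four, Fin.sum_univ_three]
    fin_cases m <;> fin_cases n <;> simp only [show (⟨0, by norm_num⟩ : Fin 3) = 0 from rfl, show (⟨1, by norm_num⟩ : Fin 3) = 1 from rfl, show (⟨2, by norm_num⟩ : Fin 3) = 2 from rfl]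
    · rw [Matrix.one_apply_eq]
      linear_combination (g 0 0 * a 0 0 + g 1 0 * a 1 0 + g 2 0 * a 2 0 + g 3 0 * a 3 0) * P00 + (g 0 0 * a 0 1 + g 1 0 * a 1 1 + g 2 0 * a 2 1 + g 3 0 * a 3 1) * P01 + (g 0 0 * a 0 2 + g 1 0 * a 1 2 + g 2 0 * a 2 2 + g 3 0 * a 3 2) * P02 + P00 - (((a 0 0 ^ 2 + a 0 1 ^ 2 + a 0 2 ^ 2) * g 0 0 + (a 1 0 ^ 2 + a 1 1 ^ 2 + a 1 2 ^ 2) * g 1 0 + (a 2 0 ^ 2 + a 2 1 ^ 2 + a 2 2 ^ 2) * g 2 0 + (a 3 0 ^ 2 + a 3 1 ^ 2 + a 3 2 ^ 2) * g 3 0) / 2) * S0 - (((a 0 0 ^ 2 + a 0 1 ^ 2 + a 0 2 ^ 2) * g 0 0 + (a 1 0 ^ 2 + a 1 1 ^ 2 + a 1 2 ^ 2) * g 1 0 + (a 2 0 ^ 2 + a 2 1 ^ 2 + a 2 2 ^ 2) * g 2 0 + (a 3 0 ^ 2 + a 3 1 ^ 2 + a 3 2 ^ 2) * g 3 0) / 2)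 * S0
    · rw [Matrix.one_apply_ne (by decide)]
      linear_combination (g 0 0 * a 0 0 + g 1 0 * a 1 0 + g 2 0 * a 2 0 + g 3 0 * a 3 0) * P10 + (g 0 0 * a 0 1 + g 1 0 * a 1 1 + g 2 0 * a 2 1 + g 3 0 * a 3 1) * P11 + (g 0 0 * a 0 2 + g 1 0 * a 1 2 + g 2 0 * a 2 2 + g 3 0 * a 3 2) * P12 + P01 - (((a 0 0 ^ 2 + a 0 1 ^ 2 + a 0 2 ^ 2) * g 0 0 + (a 1 0 ^ 2 + a 1 1 ^ 2 + a 1 2 ^ 2) * g 1 0 + (a 2 0 ^ 2 + a 2 1 ^ 2 + a 2 2 ^ 2) * g 2 0 + (a 3 0 ^ 2 + a 3 1 ^ 2 + a 3 2 ^ 2) * g 3 0) / 2) * S1 - (((a 0 0 ^ 2 + a 0 1 ^ 2 + a 0 2 ^ 2) * g 0 1 + (a 1 0 ^ 2 + a 1 1 ^ 2 + a 1 2 ^ 2) * g 1 1 + (a 2 0 ^ 2 + a 2 1 ^ 2 + a 2 2 ^ 2) * g 2 1 + (a 3 0 ^ 2 + a 3 1 ^ 2 + a 3 2 ^ 2)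 * g 3 1) / 2) * S0
    · rw [Matrix.one_apply_ne (by decide)]
      linear_combination (g 0 0 * a 0 0 + g 1 0 * a 1 0 + g 2 0 * a 2 0 + g 3 0 * a 3 0) * P20 + (g 0 0 * a 0 1 + g 1 0 * a 1 1 + g 2 0 * a 2 1 + g 3 0 * a 3 1) * P21 + (g 0 0 * a 0 2 + g 1 0 * a 1 2 + g 2 0 * a 2 2 + g 3 0 * a 3 2) * P22 + P02 - (((a 0 0 ^ 2 + a 0 1 ^ 2 + a 0 2 ^ 2) * g 0 0 + (a 1 0 ^ 2 + a 1 1 ^ 2 + a 1 2 ^ 2) * g 1 0 + (a 2 0 ^ 2 + a 2 1 ^ 2 + a 2 2 ^ 2) * g 2 0 + (a 3 0 ^ 2 + a 3 1 ^ 2 + a 3 2 ^ 2) * g 3 0) / 2) * S2 - (((a 0 0 ^ 2 + a 0 1 ^ 2 + a 0 2 ^ 2) * g 0 2 + (a 1 0 ^ 2 + a 1 1 ^ 2 + a 1 2 ^ 2) * g 1 2 + (a 2 0 ^ 2 + a 2 1 ^ 2 + a 2 2 ^ 2) * g 2 2 + (a 3 0 ^ 2 + a 3 1 ^ 2 + a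 3 2 ^ 2) * g 3 2) / 2) * S0
    · rw [Matrix.one_apply_ne (by decide)]
      linear_combination (g 0 1 * a 0 0 + g 1 1 * a 1 0 + g 2 1 * a 2 0 + g 3 1 * a 3 0) * P00 + (g 0 1 * a 0 1 + g 1 1 * a 1 1 + g 2 1 * a 2 1 + g 3 1 * a 3 1) * P01 + (g 0 1 * a 0 2 + g 1 1 * a 1 2 + g 2 1 * a 2 2 + g 3 1 * a 3 2) * P02 + P10 - (((a 0 0 ^ 2 + a 0 1 ^ 2 + a 0 2 ^ 2) * g 0 1 + (a 1 0 ^ 2 + a 1 1 ^ 2 + a 1 2 ^ 2) * g 1 1 + (a 2 0 ^ 2 + a 2 1 ^ 2 + a 2 2 ^ 2) * g 2 1 + (a 3 0 ^ 2 + a 3 1 ^ 2 + a 3 2 ^ 2) * g 3 1) / 2) * S0 - (((a 0 0 ^ 2 + a 0 1 ^ 2 + a 0 2 ^ 2) * g 0 0 + (a 1 0 ^ 2 + a 1 1 ^ 2 + a 1 2 ^ 2) * g 1 0 + (a 2 0 ^ 2 + a 2 1 ^ 2 + a 2 2 ^ 2) * g 2 0 + (a 3 0 ^ 2 + a 3 1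 ^ 2 + a 3 2 ^ 2) * g 3 0) / 2) * S1
    · rw [Matrix.one_apply_eq]
      linear_combination (g 0 1 * a 0 0 + g 1 1 * a 1 0 + g 2 1 * a 2 0 + g 3 1 * a 3 0) * P10 + (g 0 1 * a 0 1 + g 1 1 * a 1 1 + g 2 1 * a 2 1 + g 3 1 * a 3 1) * P11 + (g 0 1 * a 0 2 + g 1 1 * a 1 2 + g 2 1 * a 2 2 + g 3 1 * a 3 2) * P12 + P11 - (((a 0 0 ^ 2 + a 0 1 ^ 2 + a 0 2 ^ 2) * g 0 1 + (a 1 0 ^ 2 + a 1 1 ^ 2 + a 1 2 ^ 2) * g 1 1 + (a 2 0 ^ 2 + a 2 1 ^ 2 + a 2 2 ^ 2) * g 2 1 + (a 3 0 ^ 2 + a 3 1 ^ 2 + a 3 2 ^ 2) * g 3 1) / 2) * S1 - (((a 0 0 ^ 2 + a 0 1 ^ 2 + a 0 2 ^ 2) * g 0 1 + (a 1 0 ^ 2 + a 1 1 ^ 2 + a 1 2 ^ 2) * g 1 1 + (a 2 0 ^ 2 + a 2 1 ^ 2 + a 2 2 ^ 2) * g 2 1 + (a 3 0 ^ 2 +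 a 3 1 ^ 2 + a 3 2 ^ 2) * g 3 1) / 2) * S1
    · rw [Matrix.one_apply_ne (by decide)]
      linear_combination (g 0 1 * a 0 0 + g 1 1 * a 1 0 + g 2 1 * a 2 0 + g 3 1 * a 3 0) * P20 + (g 0 1 * a 0 1 + g 1 1 * a 1 1 + g 2 1 * a 2 1 + g 3 1 * a 3 1) * P21 + (g 0 1 * a 0 2 + g 1 1 * a 1 2 + g 2 1 * a 2 2 + g 3 1 * a 3 2) * P22 + P12 - (((a 0 0 ^ 2 + a 0 1 ^ 2 + a 0 2 ^ 2) * g 0 1 + (a 1 0 ^ 2 + a 1 1 ^ 2 + a 1 2 ^ 2) * g 1 1 + (a 2 0 ^ 2 + a 2 1 ^ 2 + a 2 2 ^ 2) * g 2 1 + (a 3 0 ^ 2 + a 3 1 ^ 2 + a 3 2 ^ 2) * g 3 1) / 2) * S2 - (((a 0 0 ^ 2 + a 0 1 ^ 2 + a 0 2 ^ 2) * g 0 2 + (a 1 0 ^ 2 + a 1 1 ^ 2 + a 1 2 ^ 2) * g 1 2 + (a 2 0 ^ 2 + a 2 1 ^ 2 + a 2 2 ^ 2) * g 2 2 + (a 3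 0 ^ 2 + a 3 1 ^ 2 + a 3 2 ^ 2) * g 3 2) / 2) * S1
    · rw [Matrix.one_apply_ne (by decide)]
      linear_combination (g 0 2 * a 0 0 + g 1 2 * a 1 0 + g 2 2 * a 2 0 + g 3 2 * a 3 0) * P00 + (g 0 2 * a 0 1 + g 1 2 * a 1 1 + g 2 2 * a 2 1 + g 3 2 * a 3 1) * P01 + (g 0 2 * a 0 2 + g 1 2 * a 1 2 + g 2 2 * a 2 2 + g 3 2 * a 3 2) * P02 + P20 - (((a 0 0 ^ 2 + a 0 1 ^ 2 + a 0 2 ^ 2) * g 0 2 + (a 1 0 ^ 2 + a 1 1 ^ 2 + a 1 2 ^ 2) * g 1 2 + (a 2 0 ^ 2 + a 2 1 ^ 2 + a 2 2 ^ 2) * g 2 2 + (a 3 0 ^ 2 + a 3 1 ^ 2 + a 3 2 ^ 2) * g 3 2) / 2) * S0 - (((a 0 0 ^ 2 + a 0 1 ^ 2 + a 0 2 ^ 2) * g 0 0 + (a 1 0 ^ 2 + a 1 1 ^ 2 + a 1 2 ^ 2) * g 1 0 + (a 2 0 ^ 2 + a 2 1 ^ 2 + a 2 2 ^ 2) * g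 2 0 + (a 3 0 ^ 2 + a 3 1 ^ 2 + a 3 2 ^ 2) * g 3 0) / 2) * S2
    · rw [Matrix.one_apply_ne (by decide)]
      linear_combination (g 0 2 * a 0 0 + g 1 2 * a 1 0 + g 2 2 * a 2 0 + g 3 2 * a 3 0) * P10 + (g 0 2 * a 0 1 + g 1 2 * a 1 1 + g 2 2 * a 2 1 + g 3 2 * a 3 1) * P11 + (g 0 2 * a 0 2 + g 1 2 * a 1 2 + g 2 2 * a 2 2 + g 3 2 * a 3 2) * P12 + P21 - (((a 0 0 ^ 2 + a 0 1 ^ 2 + a 0 2 ^ 2) * g 0 2 + (a 1 0 ^ 2 + a 1 1 ^ 2 + a 1 2 ^ 2) * g 1 2 + (a 2 0 ^ 2 + a 2 1 ^ 2 + a 2 2 ^ 2) * g 2 2 + (a 3 0 ^ 2 + a 3 1 ^ 2 + a 3 2 ^ 2) * g 3 2) / 2) * S1 - (((a 0 0 ^ 2 + a 0 1 ^ 2 + a 0 2 ^ 2) * g 0 1 + (a 1 0 ^ 2 + a 1 1 ^ 2 + a 1 2 ^ 2) * g 1 1 + (a 2 0 ^ 2 + a 2 1 ^ 2 + a 2 2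 ^ 2) * g 2 1 + (a 3 0 ^ 2 + a 3 1 ^ 2 + a 3 2 ^ 2) * g 3 1) / 2) * S2
    · rw [Matrix.one_apply_eq]
      linear_combination (g 0 2 * a 0 0 + g 1 2 * a 1 0 + g 2 2 * a 2 0 + g 3 2 * a 3 0) * P20 + (g 0 2 * a 0 1 + g 1 2 * a 1 1 + g 2 2 * a 2 1 + g 3 2 * a 3 1) * P21 + (g 0 2 * a 0 2 + g 1 2 * a 1 2 + g 2 2 * a 2 2 + g 3 2 * a 3 2) * P22 + P22 - (((a 0 0 ^ 2 + a 0 1 ^ 2 + a 0 2 ^ 2) * g 0 2 + (a 1 0 ^ 2 + a 1 1 ^ 2 + a 1 2 ^ 2) * g 1 2 + (a 2 0 ^ 2 + a 2 1 ^ 2 + a 2 2 ^ 2) * g 2 2 + (a 3 0 ^ 2 + a 3 1 ^ 2 + a 3 2 ^ 2) * g 3 2) / 2) * S2 - (((a 0 0 ^ 2 + a 0 1 ^ 2 + a 0 2 ^ 2) * g 0 2 + (a 1 0 ^ 2 + a 1 1 ^ 2 + a 1 2 ^ 2) * g 1 2 + (a 2 0 ^ 2 + a 2 1 ^ 2 +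 a 2 2 ^ 2) * g 2 2 + (a 3 0 ^ 2 + a 3 1 ^ 2 + a 3 2 ^ 2) * g 3 2) / 2) * S2
  -- part 2
  · simp only [key2]
    ext m n
    simp only [Matrix.sum_apply, Matrix.add_apply, Matrix.smul_apply, Matrix.vecMulVec_apply, smul_eq_mul,
      Fin.sum_univ_four, Fin.sum_univ_three]
    fin_cases m <;> fin_cases n <;> simp only [show (⟨0, by norm_num⟩ : Fin 3) = 0 from rfl, show (⟨1, by norm_num⟩ : Fin 3) = 1 from rfl, show (⟨2, by norm_num⟩ : Fin 3) = 2 from rfl]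
    · rw [Matrix.one_apply_eq]
      linear_combination (g 0 0 * a 0 0 + g 1 0 * a 1 0 + g 2 0 * a 2 0 + g 3 0 * a 3 0) * P00 + (g 0 0 * a 0 1 + g 1 0 * a 1 1 + g 2 0 * a 2 1 + g 3 0 * a 3 1) * P01 + (g 0 0 * a 0 2 + g 1 0 * a 1 2 + g 2 0 * a 2 2 + g 3 0 * a 3 2) * P02 + P00 - (((a 0 0 ^ 2 + a 0 1 ^ 2 + a 0 2 ^ 2) * g 0 0 + (a 1 0 ^ 2 + a 1 1 ^ 2 + a 1 2 ^ 2) * g 1 0 + (a 2 0 ^ 2 + a 2 1 ^ 2 + a 2 2 ^ 2) * g 2 0 + (a 3 0 ^ 2 + a 3 1 ^ 2 + a 3 2 ^ 2) * g 3 0) / 2) * S0 - (((a 0 0 ^ 2 + a 0 1 ^ 2 + a 0 2 ^ 2) * g 0 0 + (a 1 0 ^ 2 + a 1 1 ^ 2 + a 1 2 ^ 2) * g 1 0 + (a 2 0 ^ 2 + a 2 1 ^ 2 + a 2 2 ^ 2) * g 2 0 + (a 3 0 ^ 2 + a 3 1 ^ 2 + a 3 2 ^ 2) * g 3 0) / 2)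 * S0
    · rw [Matrix.one_apply_ne (by decide)]
      linear_combination (g 0 0 * a 0 0 + g 1 0 * a 1 0 + g 2 0 * a 2 0 + g 3 0 * a 3 0) * P10 + (g 0 0 * a 0 1 + g 1 0 * a 1 1 + g 2 0 * a 2 1 + g 3 0 * a 3 1) * P11 + (g 0 0 * a 0 2 + g 1 0 * a 1 2 + g 2 0 * a 2 2 + g 3 0 * a 3 2) * P12 + P01 - (((a 0 0 ^ 2 + a 0 1 ^ 2 + a 0 2 ^ 2) * g 0 0 + (a 1 0 ^ 2 + a 1 1 ^ 2 + a 1 2 ^ 2) * g 1 0 + (a 2 0 ^ 2 + a 2 1 ^ 2 + a 2 2 ^ 2) * g 2 0 + (a 3 0 ^ 2 + a 3 1 ^ 2 + a 3 2 ^ 2) * g 3 0) / 2) * S1 - (((a 0 0 ^ 2 + a 0 1 ^ 2 + a 0 2 ^ 2) * g 0 1 + (a 1 0 ^ 2 + a 1 1 ^ 2 + a 1 2 ^ 2) * g 1 1 + (a 2 0 ^ 2 + a 2 1 ^ 2 + a 2 2 ^ 2) * g 2 1 + (a 3 0 ^ 2 + a 3 1 ^ 2 + a 3 2 ^ 2)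 * g 3 1) / 2) * S0
    · rw [Matrix.one_apply_ne (by decide)]
      linear_combination (g 0 0 * a 0 0 + g 1 0 * a 1 0 + g 2 0 * a 2 0 + g 3 0 * a 3 0) * P20 + (g 0 0 * a 0 1 + g 1 0 * a 1 1 + g 2 0 * a 2 1 + g 3 0 * a 3 1) * P21 + (g 0 0 * a 0 2 + g 1 0 * a 1 2 + g 2 0 * a 2 2 + g 3 0 * a 3 2) * P22 + P02 - (((a 0 0 ^ 2 + a 0 1 ^ 2 + a 0 2 ^ 2) * g 0 0 + (a 1 0 ^ 2 + a 1 1 ^ 2 + a 1 2 ^ 2) * g 1 0 + (a 2 0 ^ 2 + a 2 1 ^ 2 + a 2 2 ^ 2) * g 2 0 + (a 3 0 ^ 2 + a 3 1 ^ 2 + a 3 2 ^ 2) * g 3 0) / 2) * S2 - (((a 0 0 ^ 2 + a 0 1 ^ 2 + a 0 2 ^ 2) * g 0 2 + (a 1 0 ^ 2 + a 1 1 ^ 2 + a 1 2 ^ 2) * g 1 2 + (a 2 0 ^ 2 + a 2 1 ^ 2 + a 2 2 ^ 2) * g 2 2 + (a 3 0 ^ 2 + a 3 1 ^ 2 + a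 3 2 ^ 2) * g 3 2) / 2) * S0
    · rw [Matrix.one_apply_ne (by decide)]
      linear_combination (g 0 1 * a 0 0 + g 1 1 * a 1 0 + g 2 1 * a 2 0 + g 3 1 * a 3 0) * P00 + (g 0 1 * a 0 1 + g 1 1 * a 1 1 + g 2 1 * a 2 1 + g 3 1 * a 3 1) * P01 + (g 0 1 * a 0 2 + g 1 1 * a 1 2 + g 2 1 * a 2 2 + g 3 1 * a 3 2) * P02 + P10 - (((a 0 0 ^ 2 + a 0 1 ^ 2 + a 0 2 ^ 2) * g 0 1 + (a 1 0 ^ 2 + a 1 1 ^ 2 + a 1 2 ^ 2) * g 1 1 + (a 2 0 ^ 2 + a 2 1 ^ 2 + a 2 2 ^ 2) * g 2 1 + (a 3 0 ^ 2 + a 3 1 ^ 2 + a 3 2 ^ 2) * g 3 1) / 2) * S0 - (((a 0 0 ^ 2 + a 0 1 ^ 2 + a 0 2 ^ 2) * g 0 0 + (a 1 0 ^ 2 + a 1 1 ^ 2 + a 1 2 ^ 2) * g 1 0 + (a 2 0 ^ 2 + a 2 1 ^ 2 + a 2 2 ^ 2) * g 2 0 + (a 3 0 ^ 2 + a 3 1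 ^ 2 + a 3 2 ^ 2) * g 3 0) / 2) * S1
    · rw [Matrix.one_apply_eq]
      linear_combination (g 0 1 * a 0 0 + g 1 1 * a 1 0 + g 2 1 * a 2 0 + g 3 1 * a 3 0) * P10 + (g 0 1 * a 0 1 + g 1 1 * a 1 1 + g 2 1 * a 2 1 + g 3 1 * a 3 1) * P11 + (g 0 1 * a 0 2 + g 1 1 * a 1 2 + g 2 1 * a 2 2 + g 3 1 * a 3 2) * P12 + P11 - (((a 0 0 ^ 2 + a 0 1 ^ 2 + a 0 2 ^ 2) * g 0 1 + (a 1 0 ^ 2 + a 1 1 ^ 2 + a 1 2 ^ 2) * g 1 1 + (a 2 0 ^ 2 + a 2 1 ^ 2 + a 2 2 ^ 2) * g 2 1 + (a 3 0 ^ 2 + a 3 1 ^ 2 + a 3 2 ^ 2) * g 3 1) / 2) * S1 - (((a 0 0 ^ 2 + a 0 1 ^ 2 + a 0 2 ^ 2) * g 0 1 + (a 1 0 ^ 2 + a 1 1 ^ 2 + a 1 2 ^ 2) * g 1 1 + (a 2 0 ^ 2 + a 2 1 ^ 2 + a 2 2 ^ 2) * g 2 1 + (a 3 0 ^ 2 +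 a 3 1 ^ 2 + a 3 2 ^ 2) * g 3 1) / 2) * S1
    · rw [Matrix.one_apply_ne (by decide)]
      linear_combination (g 0 1 * a 0 0 + g 1 1 * a 1 0 + g 2 1 * a 2 0 + g 3 1 * a 3 0) * P20 + (g 0 1 * a 0 1 + g 1 1 * a 1 1 + g 2 1 * a 2 1 + g 3 1 * a 3 1) * P21 + (g 0 1 * a 0 2 + g 1 1 * a 1 2 + g 2 1 * a 2 2 + g 3 1 * a 3 2) * P22 + P12 - (((a 0 0 ^ 2 + a 0 1 ^ 2 + a 0 2 ^ 2) * g 0 1 + (a 1 0 ^ 2 + a 1 1 ^ 2 + a 1 2 ^ 2) * g 1 1 + (a 2 0 ^ 2 + a 2 1 ^ 2 + a 2 2 ^ 2) * g 2 1 + (a 3 0 ^ 2 + a 3 1 ^ 2 + a 3 2 ^ 2) * g 3 1) / 2) * S2 - (((a 0 0 ^ 2 + a 0 1 ^ 2 + a 0 2 ^ 2) * g 0 2 + (a 1 0 ^ 2 + a 1 1 ^ 2 + a 1 2 ^ 2) * g 1 2 + (a 2 0 ^ 2 + a 2 1 ^ 2 + a 2 2 ^ 2) * g 2 2 + (a 3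 0 ^ 2 + a 3 1 ^ 2 + a 3 2 ^ 2) * g 3 2) / 2) * S1
    · rw [Matrix.one_apply_ne (by decide)]
      linear_combination (g 0 2 * a 0 0 + g 1 2 * a 1 0 + g 2 2 * a 2 0 + g 3 2 * a 3 0) * P00 + (g 0 2 * a 0 1 + g 1 2 * a 1 1 + g 2 2 * a 2 1 + g 3 2 * a 3 1) * P01 + (g 0 2 * a 0 2 + g 1 2 * a 1 2 + g 2 2 * a 2 2 + g 3 2 * a 3 2) * P02 + P20 - (((a 0 0 ^ 2 + a 0 1 ^ 2 + a 0 2 ^ 2) * g 0 2 + (a 1 0 ^ 2 + a 1 1 ^ 2 + a 1 2 ^ 2) * g 1 2 + (a 2 0 ^ 2 + a 2 1 ^ 2 + a 2 2 ^ 2) * g 2 2 + (a 3 0 ^ 2 + a 3 1 ^ 2 + a 3 2 ^ 2) * g 3 2) / 2) * S0 - (((a 0 0 ^ 2 + a 0 1 ^ 2 + a 0 2 ^ 2) * g 0 0 + (a 1 0 ^ 2 + a 1 1 ^ 2 + a 1 2 ^ 2) * g 1 0 + (a 2 0 ^ 2 + a 2 1 ^ 2 + a 2 2 ^ 2) * g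 2 0 + (a 3 0 ^ 2 + a 3 1 ^ 2 + a 3 2 ^ 2) * g 3 0) / 2) * S2
    · rw [Matrix.one_apply_ne (by decide)]
      linear_combination (g 0 2 * a 0 0 + g 1 2 * a 1 0 + g 2 2 * a 2 0 + g 3 2 * a 3 0) * P10 + (g 0 2 * a 0 1 + g 1 2 * a 1 1 + g 2 2 * a 2 1 + g 3 2 * a 3 1) * P11 + (g 0 2 * a 0 2 + g 1 2 * a 1 2 + g 2 2 * a 2 2 + g 3 2 * a 3 2) * P12 + P21 - (((a 0 0 ^ 2 + a 0 1 ^ 2 + a 0 2 ^ 2) * g 0 2 + (a 1 0 ^ 2 + a 1 1 ^ 2 + a 1 2 ^ 2) * g 1 2 + (a 2 0 ^ 2 + a 2 1 ^ 2 + a 2 2 ^ 2) * g 2 2 + (a 3 0 ^ 2 + a 3 1 ^ 2 + a 3 2 ^ 2) * g 3 2) / 2) * S1 - (((a 0 0 ^ 2 + a 0 1 ^ 2 + a 0 2 ^ 2) * g 0 1 + (a 1 0 ^ 2 + a 1 1 ^ 2 + a 1 2 ^ 2) * g 1 1 + (a 2 0 ^ 2 + a 2 1 ^ 2 + a 2 2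 ^ 2) * g 2 1 + (a 3 0 ^ 2 + a 3 1 ^ 2 + a 3 2 ^ 2) * g 3 1) / 2) * S2
    · rw [Matrix.one_apply_eq]
      linear_combination (g 0 2 * a 0 0 + g 1 2 * a 1 0 + g 2 2 * a 2 0 + g 3 2 * a 3 0) * P20 + (g 0 2 * a 0 1 + g 1 2 * a 1 1 + g 2 2 * a 2 1 + g 3 2 * a 3 1) * P21 + (g 0 2 * a 0 2 + g 1 2 * a 1 2 + g 2 2 * a 2 2 + g 3 2 * a 3 2) * P22 + P22 - (((a 0 0 ^ 2 + a 0 1 ^ 2 + a 0 2 ^ 2) * g 0 2 + (a 1 0 ^ 2 + a 1 1 ^ 2 + a 1 2 ^ 2) * g 1 2 + (a 2 0 ^ 2 + a 2 1 ^ 2 + a 2 2 ^ 2) * g 2 2 + (a 3 0 ^ 2 + a 3 1 ^ 2 + a 3 2 ^ 2) * g 3 2) / 2) * S2 - (((a 0 0 ^ 2 + a 0 1 ^ 2 + a 0 2 ^ 2) * g 0 2 + (a 1 0 ^ 2 + a 1 1 ^ 2 + a 1 2 ^ 2) * g 1 2 + (a 2 0 ^ 2 + a 2 1 ^ 2 +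 a 2 2 ^ 2) * g 2 2 + (a 3 0 ^ 2 + a 3 1 ^ 2 + a 3 2 ^ 2) * g 3 2) / 2) * S2
end

section
/- With a₀,…,a₃, g₀,…,g₃ and V as in the tetrahedron setup, for every vector w ∈ ℝ³ one has ∑_{i ≠ j} (−18 V² ‖g_k × g_l‖²) · ⟨gᵢ, w⟩ · gⱼ = w, where for each ordered pair (i,j) with i ≠ j, {k,l} = {0,1,2,3} ∖ {i,j}. (Lemma 4.10: the local averaging operator Π̄_T² w = ∑_{F ≠ F'} ω_{FF'}^T (|F'|/|T|) n_{F'} l_F(w), with l_F(w) = |F| w·n_F for a constant field w, reproduces constant vector fields.) -/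
lemma aux_distinct : ∀ i j k l : Fin 4, ({i, j, k, l} : Finset (Fin 4)) = Finset.univ →
    i ≠ j ∧ i ≠ k ∧ i ≠ l ∧ j ≠ k ∧ j ≠ l ∧ k ≠ l := by decide

set_option maxHeartbeats 1000000 in
lemma aux_trip (g : Fin 4 → Fin 3 → ℝ)
    (h0 : ∀ m, g 0 m = -(g 1 m + g 2 m + g 3 m)) :
    ∀ i k l : Fin 4, i ≠ k → i ≠ l → k ≠ l →
      (∑ m, g i m * cross3 (g k) (g l) m) ^ 2
        = (∑ m, g 1 m * cross3 (g 2) (g 3) m) ^ 2 := by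
  intro i k l hik hil hkl
  fin_cases i <;> fin_cases k <;> fin_cases l <;>
    first
      | exact absurd rfl hik
      | exact absurd rfl hil
      | exact absurd rfl hkl
      | (simp only [cross3, Fin.sum_univ_three, Matrix.cons_val_zero, Matrix.cons_val_one,
          Matrix.head_cons, Matrix.cons_val_two, Matrix.tail_cons, Fin.reduceFinMk,
          Fin.isValue, h0]
         try ring)

/-- Lemma 4.10: for a nondegenerate tetrahedron with vertices `a 0, …, a 3`,
barycentric gradients `g 0, …, g 3` (characterized by `⟨g i, a j − a k⟩ = δᵢⱼ − δᵢₖ`)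
and volume `V = |det(a₁−a₀, a₂−a₀, a₃−a₀)|/6`, with for each ordered pair `(i,j)`,
`i ≠ j`, the complementary pair `{k,l}` encoded by `kl` (so that
`{i, j, (kl i j).1, (kl i j).2} = {0,1,2,3}`), the averaging operator reproduces
constants: for every `w ∈ ℝ³`, `∑_{i≠j} (−18 V² ‖g_k × g_l‖²) ⟨gᵢ, w⟩ gⱼ = w`. -/
theorem stmt_7 (a : Fin 4 → Fin 3 → ℝ) (g : Fin 4 → Fin 3 → ℝ)
    (ha : AffineIndependent ℝ a)
    (hg : ∀ i j k : Fin 4, ∑ m, g i m * (a j m - a k m) =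
      (if i = j then (1 : ℝ) else 0) - (if i = k then (1 : ℝ) else 0))
    (V : ℝ)
    (hV : V = |(Matrix.of fun (r : Fin 3) (c : Fin 3) => a r.succ c - a 0 c).det| / 6)
    (kl : Fin 4 → Fin 4 → Fin 4 × Fin 4)
    (hkl : ∀ i j : Fin 4, i ≠ j →
      ({i, j, (kl i j).1, (kl i j).2} : Finset (Fin 4)) = Finset.univ)
    (w : Fin 3 → ℝ) :
    (∑ i : Fin 4, ∑ j : Fin 4,
        if i ≠ j then
          ((-(18 * V ^ 2 * ∑ m, (cross3 (g (kl i j).1) (g (kl i j).2)) m ^ 2)) *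
            ∑ m, g i m * w m) • g j
        else 0) = w := by
  classical
  set E : Matrix (Fin 3) (Fin 3) ℝ := Matrix.of fun r c => a r.succ c - a 0 c with hE
  set G : Matrix (Fin 3) (Fin 3) ℝ := Matrix.of fun r c => g r.succ c with hGdef
  have hEG : E * G.transpose = 1 := by
    ext r s
    have h := hg s.succ r.succ 0
    rw [Matrix.mul_apply, Matrix.one_apply]
    have hterm : ∀ m, E r m * G.transpose m s = g s.succ m * (a r.succ m - a 0 m) := by
      intro m
      simp only [hE, hGdef, Matrix.transpose_apply, Matrix.of_apply]
      ring
    rw [Finset.sum_congr rfl fun m _ => hterm m, h]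
    simp only [Fin.succ_inj, Fin.succ_ne_zero, if_false]
    by_cases h' : r = s
    · simp [h']
    · simp [h', Ne.symm h']
  have hGE : G.transpose * E = 1 := mul_eq_one_comm.mp hEG
  have hEtG : E.transpose * G = 1 := by
    have := congrArg Matrix.transpose hGE
    simpa [Matrix.transpose_mul] using this
  -- B1 : sum of gradients vanishes
  have hB1 : ∀ m : Fin 3, ∑ i : Fin 4, g i m = 0 := by
    have hEs : E.mulVec (fun m => ∑ i : Fin 4, g i m) = 0 := by
      funext r
      show ∑ m, E r m * (∑ i : Fin 4, g i m) = 0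
      calc ∑ m, E r m * (∑ i : Fin 4, g i m)
          = ∑ m, ∑ i : Fin 4, g i m * (a r.succ m - a 0 m) := by
            refine Finset.sum_congr rfl fun m _ => ?_
            rw [Finset.mul_sum]
            refine Finset.sum_congr rfl fun i _ => ?_
            simp only [hE, Matrix.of_apply]; ring
        _ = ∑ i : Fin 4, ∑ m, g i m * (a r.succ m - a 0 m) := Finset.sum_comm
        _ = ∑ i : Fin 4, ((if i = r.succ then (1:ℝ) else 0) - (if i = 0 then (1:ℝ) else 0)) :=
            Finset.sum_congr rfl fun i _ => hg i r.succ 0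
        _ = 0 := by simp [Finset.sum_sub_distrib]
    have hs : (fun m => ∑ i : Fin 4, g i m) = 0 := by
      have h1 : (fun m => ∑ i : Fin 4, g i m)
          = (G.transpose * E).mulVec (fun m => ∑ i : Fin 4, g i m) := by
        rw [hGE, Matrix.one_mulVec]
      rw [← Matrix.mulVec_mulVec, hEs, Matrix.mulVec_zero] at h1
      exact h1
    intro m; exact congrFun hs m
  -- B2 : ∑ i ⟨g i, u⟩ a i = u
  have hB2 : ∀ (u : Fin 3 → ℝ) (n : Fin 3),
      ∑ i : Fin 4, (∑ m, g i m * u m) * a i n = u n := by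
    intro u n
    have hd0 : ∑ i : Fin 4, (∑ m, g i m * u m) = 0 := by
      rw [Finset.sum_comm]
      calc ∑ m, ∑ i : Fin 4, g i m * u m
          = ∑ m, (∑ i : Fin 4, g i m) * u m := by
            refine Finset.sum_congr rfl fun m _ => ?_
            rw [Finset.sum_mul]
        _ = 0 := by simp [hB1]
    have hvm : Matrix.vecMul (G.mulVec u) E = u := by
      rw [← Matrix.vecMul_transpose, Matrix.vecMul_vecMul, hGE, Matrix.vecMul_one]
    have hvmn := congrFun hvm n
    have hvmn' : ∑ r : Fin 3, (∑ m, g r.succ m * u m) * (a r.succ n - a 0 n) = u n := by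
      rw [← hvmn]
      simp only [Matrix.vecMul, Matrix.mulVec, dotProduct, hE, hGdef, Matrix.of_apply]
    calc ∑ i : Fin 4, (∑ m, g i m * u m) * a i n
        = (∑ i : Fin 4, (∑ m, g i m * u m) * (a i n - a 0 n))
          + (∑ i : Fin 4, (∑ m, g i m * u m)) * a 0 n := by
          rw [Finset.sum_mul, ← Finset.sum_add_distrib]
          refine Finset.sum_congr rfl fun i _ => ?_
          ring
      _ = ∑ i : Fin 4, (∑ m, g i m * u m) * (a i n - a 0 n) := by rw [hd0]; ring
      _ = ∑ r : Fin 3, (∑ m, g r.succ m * u m) * (a r.succ n - a 0 n) := by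
          rw [Fin.sum_univ_succ]
          simp
      _ = u n := hvmn'
  -- B3 : ∑ i ⟨a i, u⟩ g i = u
  have hB3 : ∀ (u : Fin 3 → ℝ) (n : Fin 3),
      ∑ i : Fin 4, (∑ m, a i m * u m) * g i n = u n := by
    intro u n
    have hvm : Matrix.vecMul (E.mulVec u) G = u := by
      rw [← Matrix.vecMul_transpose, Matrix.vecMul_vecMul, hEtG, Matrix.vecMul_one]
    have hvmn := congrFun hvm n
    have hvmn' : ∑ r : Fin 3, (∑ m, (a r.succ m - a 0 m) * u m) * g r.succ n = u n := by
      rw [← hvmn]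
      simp only [Matrix.vecMul, Matrix.mulVec, dotProduct, hE, hGdef, Matrix.of_apply]
    have hzero : (∑ m, a 0 m * u m) * (∑ i : Fin 4, g i n) = 0 := by
      rw [hB1 n, mul_zero]
    calc ∑ i : Fin 4, (∑ m, a i m * u m) * g i n
        = (∑ i : Fin 4, (∑ m, (a i m - a 0 m) * u m) * g i n)
          + (∑ m, a 0 m * u m) * (∑ i : Fin 4, g i n) := by
          rw [Finset.mul_sum, ← Finset.sum_add_distrib]
          refine Finset.sum_congr rfl fun i _ => ?_
          rw [← add_mul]
          congr 1
          rw [← Finset.sum_add_distrib]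
          refine Finset.sum_congr rfl fun m _ => ?_
          ring
      _ = ∑ i : Fin 4, (∑ m, (a i m - a 0 m) * u m) * g i n := by rw [hzero, add_zero]
      _ = ∑ r : Fin 3, (∑ m, (a r.succ m - a 0 m) * u m) * g r.succ n := by
          rw [Fin.sum_univ_succ]
          simp
      _ = u n := hvmn'
  have hg0 : ∀ m, g 0 m = -(g 1 m + g 2 m + g 3 m) := by
    intro m
    have := hB1 m
    rw [Fin.sum_univ_four] at this
    linarith
  have hdetG : E.det * G.det = 1 := by
    have := congrArg Matrix.det hGE
    rw [Matrix.det_mul, Matrix.det_transpose, Matrix.det_one] at this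
    linarith [this]
  have hGdet3 : G.det = ∑ m, g 1 m * cross3 (g 2) (g 3) m := by
    have e0 : (0 : Fin 3).succ = (1 : Fin 4) := rfl
    have e1 : (1 : Fin 3).succ = (2 : Fin 4) := rfl
    have e2 : (2 : Fin 3).succ = (3 : Fin 4) := rfl
    rw [Matrix.det_fin_three]
    simp only [hGdef, Matrix.of_apply, cross3, Fin.sum_univ_three, Matrix.cons_val_zero,
      Matrix.cons_val_one, Matrix.head_cons, Matrix.cons_val_two, Matrix.tail_cons,
      e0, e1, e2]
    ring
  have hV2 : V ^ 2 = E.det ^ 2 / 36 := by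
    rw [hV, div_pow, sq_abs]
    norm_num
  -- coefficient identity
  have hA : ∀ i j : Fin 4, i ≠ j →
      -(18 * V ^ 2 * ∑ m, (cross3 (g (kl i j).1) (g (kl i j).2)) m ^ 2)
        = (∑ m, a i m * a j m) - (∑ m, a i m * a i m) / 2 - (∑ m, a j m * a j m) / 2 := by
    intro i j hij
    obtain ⟨h1, h2, h3, h4, h5, h6⟩ := aux_distinct i j (kl i j).1 (kl i j).2 (hkl i j hij)
    set k := (kl i j).1 with hk
    set l := (kl i j).2 with hl
    have hset := hkl i j hij
    set x := cross3 (g k) (g l) with hx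
    have hs4 : ∀ f : Fin 4 → ℝ, ∑ p : Fin 4, f p = f i + f j + f k + f l := by
      intro f
      rw [← hset]
      rw [Finset.sum_insert (by simp [h1, h2, h3, ← hk, ← hl]), Finset.sum_insert (by simp [h4, h5, ← hk, ← hl]),
        Finset.sum_insert (by simp [h6, ← hk, ← hl]), Finset.sum_singleton]
      ring
    have hxk : ∑ m, g k m * x m = 0 := by
      simp only [hx, cross3, Fin.sum_univ_three, Matrix.cons_val_zero, Matrix.cons_val_one,
        Matrix.head_cons, Matrix.cons_val_two, Matrix.tail_cons]
      ring
    have hxl : ∑ m, g l m * x m = 0 := by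
      simp only [hx, cross3, Fin.sum_univ_three, Matrix.cons_val_zero, Matrix.cons_val_one,
        Matrix.head_cons, Matrix.cons_val_two, Matrix.tail_cons]
      ring
    have hzero : ∑ p : Fin 4, ∑ m, g p m * x m = 0 := by
      rw [Finset.sum_comm]
      calc ∑ m, ∑ p : Fin 4, g p m * x m
          = ∑ m, (∑ p : Fin 4, g p m) * x m := by
            refine Finset.sum_congr rfl fun m _ => ?_
            rw [Finset.sum_mul]
        _ = 0 := by simp [hB1]
    set t := ∑ m, g i m * x m with htdef
    have hxj : ∑ m, g j m * x m = -t := by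
      have hh := hs4 (fun p => ∑ m, g p m * x m)
      rw [hzero] at hh
      rw [hxk, hxl] at hh
      linarith
    have hxcoord : ∀ m', x m' = t * (a i m' - a j m') := by
      intro m'
      have h2m := hB2 x m'
      rw [hs4 (fun p => (∑ m, g p m * x m) * a p m')] at h2m
      rw [hxk, hxl, hxj] at h2m
      linear_combination -h2m
    have htrip := aux_trip g hg0 i k l h2 h3 h6
    have ht2 : t ^ 2 * E.det ^ 2 = 1 := by
      have hts : t ^ 2 = G.det ^ 2 := by rw [hGdet3]; exact htrip
      calc t ^ 2 * E.det ^ 2 = (E.det * G.det) ^ 2 := by rw [hts]; ring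
        _ = 1 := by rw [hdetG]; norm_num
    have hnorm : ∑ m, x m ^ 2
        = t ^ 2 * ((∑ m, a i m * a j m) * (-2) + (∑ m, a i m * a i m) + (∑ m, a j m * a j m)) := by
      rw [Fin.sum_univ_three, hxcoord 0, hxcoord 1, hxcoord 2,
        Fin.sum_univ_three, Fin.sum_univ_three, Fin.sum_univ_three]
      ring
    have h36 : 36 * V ^ 2 * t ^ 2 = 1 := by
      rw [hV2]
      linear_combination ht2
    rw [hnorm]
    linear_combination (-((∑ m, a i m * a j m) * (-2) + (∑ m, a i m * a i m)
      + (∑ m, a j m * a j m)) / 2) * h36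
  -- rewrite summands
  have hrw : ∀ i j : Fin 4,
      (if i ≠ j then
          ((-(18 * V ^ 2 * ∑ m, (cross3 (g (kl i j).1) (g (kl i j).2)) m ^ 2)) *
            ∑ m, g i m * w m) • g j
        else 0)
      = (((∑ m, a i m * a j m) - (∑ m, a i m * a i m) / 2 - (∑ m, a j m * a j m) / 2) *
          ∑ m, g i m * w m) • g j := by
    intro i j
    by_cases h : i = j
    · subst h
      rw [if_neg (by simp)]
      have hz : (∑ m, a i m * a i m) - (∑ m, a i m * a i m) / 2 - (∑ m, a i m * a i m) / 2
          = 0 := by ring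
      rw [hz, zero_mul, zero_smul]
    · rw [if_pos h, hA i j h]
  simp only [hrw]
  funext n
  simp only [Finset.sum_apply, Pi.smul_apply, smul_eq_mul]
  have hy3 := hB3 w n
  have hy2_0 := hB2 w 0
  have hy2_1 := hB2 w 1
  have hy2_2 := hB2 w 2
  have hy1n := hB1 n
  have hy1_0 := hB1 0
  have hy1_1 := hB1 1
  have hy1_2 := hB1 2
  simp only [Fin.sum_univ_four, Fin.sum_univ_three] at hy3 hy2_0 hy2_1 hy2_2 hy1n hy1_0 hy1_1 hy1_2 ⊢
  linear_combination hy3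
    + (g 0 n * a 0 0 + g 1 n * a 1 0 + g 2 n * a 2 0 + g 3 n * a 3 0) * hy2_0
    + (g 0 n * a 0 1 + g 1 n * a 1 1 + g 2 n * a 2 1 + g 3 n * a 3 1) * hy2_1
    + (g 0 n * a 0 2 + g 1 n * a 1 2 + g 2 n * a 2 2 + g 3 n * a 3 2) * hy2_2
    + (-(1/2) * ((a 0 0 * a 0 0 + a 0 1 * a 0 1 + a 0 2 * a 0 2) * (g 0 0 * w 0 + g 0 1 * w 1 + g 0 2 * w 2) + (a 1 0 * a 1 0 + a 1 1 * a 1 1 + a 1 2 * a 1 2) * (g 1 0 * w 0 + g 1 1 * w 1 + g 1 2 * w 2) + (a 2 0 * a 2 0 + a 2 1 * a 2 1 + a 2 2 * a 2 2) * (g 2 0 * w 0 + g 2 1 * w 1 + g 2 2 * w 2) + (a 3 0 * a 3 0 + a 3 1 * a 3 1 + a 3 2 * a 3 2) * (g 3 0 * w 0 + g 3 1 * w 1 + g 3 2 * w 2))) * hy1n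
    + (-(1/2) * ((a 0 0 * a 0 0 + a 0 1 * a 0 1 + a 0 2 * a 0 2) * g 0 n + (a 1 0 * a 1 0 + a 1 1 * a 1 1 + a 1 2 * a 1 2) * g 1 n + (a 2 0 * a 2 0 + a 2 1 * a 2 1 + a 2 2 * a 2 2) * g 2 n + (a 3 0 * a 3 0 + a 3 1 * a 3 1 + a 3 2 * a 3 2) * g 3 n) * w 0) * hy1_0
    + (-(1/2) * ((a 0 0 * a 0 0 + a 0 1 * a 0 1 + a 0 2 * a 0 2) * g 0 n + (a 1 0 * a 1 0 + a 1 1 * a 1 1 + a 1 2 * a 1 2) * g 1 n + (a 2 0 * a 2 0 + a 2 1 * a 2 1 + a 2 2 * a 2 2) * g 2 n + (a 3 0 * a 3 0 + a 3 1 * a 3 1 + a 3 2 * a 3 2) * g 3 n) * w 1) * hy1_1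
    + (-(1/2) * ((a 0 0 * a 0 0 + a 0 1 * a 0 1 + a 0 2 * a 0 2) * g 0 n + (a 1 0 * a 1 0 + a 1 1 * a 1 1 + a 1 2 * a 1 2) * g 1 n + (a 2 0 * a 2 0 + a 2 1 * a 2 1 + a 2 2 * a 2 2) * g 2 n + (a 3 0 * a 3 0 + a 3 1 * a 3 1 + a 3 2 * a 3 2) * g 3 n) * w 2) * hy1_2
end

section
/- Let ε > 0 and s, t ∈ ℝ with s ≠ 0, t ≠ 0 and s ≠ t. Then s·exp(t/ε) − t·exp(s/ε) + t − s ≠ 0, and the two-dimensional Bernoulli function B₂^ε(s,t) := ε · (∫₀¹ exp(s·x/ε) dx) / (2 ∬_{Δ₂} exp((s·x₁ + t·x₂)/ε) dx₁ dx₂) satisfies the closed-form identity B₂^ε(s,t) = t·(t − s)·(exp(s/ε) − 1) / (2·(s·exp(t/ε) − t·exp(s/ε) + t − s)). (Closed form of the Bernoulli function B₂^ε from equations (A.1b) and (A.3).) -/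
open MeasureTheory Real Set

lemma exp_int (c d a b : ℝ) (hc : c ≠ 0) :
    ∫ y in a..b, Real.exp (c * y + d) = (Real.exp (c * b + d) - Real.exp (c * a + d)) / c := by
  have h : ∀ y ∈ Set.uIcc a b, HasDerivAt (fun y => Real.exp (c * y + d) / c)
      (Real.exp (c * y + d)) y := by
    intro y _
    have h1 : HasDerivAt (fun y => c * y + d) c y := by
      simpa using ((hasDerivAt_id y).const_mul c).add_const d
    have := h1.exp.div_const c
    simpa [mul_div_cancel_right₀ _ hc] using this
  rw [intervalIntegral.integral_eq_sub_of_hasDerivAt h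
    (Continuous.intervalIntegrable (by continuity) a b)]
  ring

set_option maxHeartbeats 1000000 in
/-- closed form of the 2D Bernoulli function, (A.1b)/(A.3):
for `ε > 0`, `s ≠ 0`, `t ≠ 0`, `s ≠ t`, one has
`s e^{t/ε} − t e^{s/ε} + t − s ≠ 0` and
`B₂^ε(s,t) = ε (∫₀¹ e^{sx/ε} dx) / (2 ∬_{Δ₂} e^{(s x₁ + t x₂)/ε})
           = t (t−s)(e^{s/ε} − 1) / (2 (s e^{t/ε} − t e^{s/ε} + t − s))`,
where `Δ₂` is the unit 2-simplex. -/
theorem stmt_9 (ε s t : ℝ) (hε : 0 < ε) (hs : s ≠ 0) (ht : t ≠ 0) (hst : s ≠ t) :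
    s * Real.exp (t / ε) - t * Real.exp (s / ε) + t - s ≠ 0 ∧
    ε * (∫ x in Set.Icc (0 : ℝ) 1, Real.exp (s * x / ε)) /
        (2 * ∫ p in {p : ℝ × ℝ | 0 ≤ p.1 ∧ 0 ≤ p.2 ∧ p.1 + p.2 ≤ 1},
          Real.exp ((s * p.1 + t * p.2) / ε)) =
      t * (t - s) * (Real.exp (s / ε) - 1) /
        (2 * (s * Real.exp (t / ε) - t * Real.exp (s / ε) + t - s)) := by
  have hε' : ε ≠ 0 := ne_of_gt hε
  have hts : t - s ≠ 0 := sub_ne_zero.mpr (Ne.symm hst)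
  have hst' : s - t ≠ 0 := sub_ne_zero.mpr hst
  set A := Real.exp (s/ε) with hA
  set B := Real.exp (t/ε) with hB
  set S : Set (ℝ×ℝ) := {p : ℝ × ℝ | 0 ≤ p.1 ∧ 0 ≤ p.2 ∧ p.1 + p.2 ≤ 1} with hSdef
  set f : ℝ×ℝ → ℝ := fun p => Real.exp ((s*p.1 + t*p.2)/ε) with hfdef
  have hfc : Continuous f := by fun_prop
  have hSm : MeasurableSet S := by
    apply MeasurableSet.inter (measurableSet_le measurable_const measurable_fst)
    exact MeasurableSet.inter (measurableSet_le measurable_const measurable_snd)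
      (measurableSet_le (measurable_fst.add measurable_snd) measurable_const)
  have hScl : IsClosed S := by
    apply IsClosed.inter (isClosed_le continuous_const continuous_fst)
    exact IsClosed.inter (isClosed_le continuous_const continuous_snd)
      (isClosed_le (continuous_fst.add continuous_snd) continuous_const)
  have hScomp : IsCompact S := by
    apply (isCompact_Icc (a := ((0:ℝ),(0:ℝ))) (b := (1,1))).of_isClosed_subset hScl
    rintro ⟨x,y⟩ ⟨h1,h2,h3⟩
    simp only [Set.mem_Icc, Prod.le_def] at *
    exact ⟨⟨h1, h2⟩, by linarith, by linarith⟩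
  have hInt : IntegrableOn f S := hfc.continuousOn.integrableOn_compact hScomp
  have hIndInt : Integrable (S.indicator f) := (integrable_indicator_iff hSm).mpr hInt
  have fub : ∫ p in S, f p = ∫ x : ℝ, ∫ y : ℝ, S.indicator f (x, y) := by
    rw [← integral_indicator hSm]
    rw [show (volume : Measure (ℝ×ℝ)) = volume.prod volume from Measure.volume_eq_prod _ _]
      at hIndInt ⊢
    exact integral_prod _ hIndInt
  have inner : ∀ x : ℝ, (∫ y : ℝ, S.indicator f (x, y)) =
      (Icc (0:ℝ) 1).indicator (fun x => ∫ y in Icc (0:ℝ) (1-x), f (x,y)) x := by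
    intro x
    by_cases hx : x ∈ Icc (0:ℝ) 1
    · rw [indicator_of_mem hx]
      rw [← integral_indicator measurableSet_Icc]
      congr 1; ext y
      simp only [indicator_apply]
      have hset : ((x,y) ∈ S ↔ y ∈ Icc 0 (1-x)) := by
        simp only [hSdef, mem_setOf_eq, mem_Icc]
        constructor
        · rintro ⟨_, h2, h3⟩; exact ⟨h2, by linarith⟩
        · rintro ⟨h2, h3⟩; exact ⟨hx.1, h2, by linarith⟩
      rw [if_congr hset rfl rfl]
    · rw [indicator_of_notMem hx]
      have hz : ∀ y : ℝ, S.indicator f (x,y) = 0 := by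
        intro y
        apply indicator_of_notMem
        simp only [mem_Icc, not_and_or, not_le] at hx
        rintro ⟨h1, h2, h3⟩
        simp only at h1 h2 h3
        rcases hx with hx | hx <;> linarith
      simp [hz]
  have fub2 : ∫ p in S, f p = ∫ x in Icc (0:ℝ) 1, ∫ y in Icc (0:ℝ) (1-x), f (x,y) := by
    rw [fub]
    simp_rw [inner]
    rw [integral_indicator measurableSet_Icc]
  have hGeq : ∀ x ∈ Icc (0:ℝ) 1, (∫ y in Icc (0:ℝ) (1-x), f (x,y)) =
      (ε/t) * (Real.exp (((s-t)/ε)*x + t/ε) - Real.exp ((s/ε)*x + 0)) := by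
    intro x hx
    have h01 : (0:ℝ) ≤ 1 - x := by linarith [hx.2]
    rw [integral_Icc_eq_integral_Ioc, ← intervalIntegral.integral_of_le h01]
    have : ∀ y : ℝ, f (x, y) = Real.exp ((t/ε) * y + (s*x/ε)) := by
      intro y; simp only [hfdef]; congr 1; field_simp; ring
    simp_rw [this]
    rw [exp_int _ _ _ _ (div_ne_zero ht hε')]
    rw [show (t/ε)*(1-x) + s*x/ε = ((s-t)/ε)*x + t/ε by field_simp; ring]
    rw [show (t/ε)*0 + s*x/ε = (s/ε)*x + 0 by ring]
    rw [div_div_eq_mul_div]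
    ring
  have key : ∫ p in S, f p = ε^2 * (s*B - t*A + t - s) / (s*t*(t-s)) := by
    rw [fub2, setIntegral_congr_fun measurableSet_Icc hGeq]
    rw [integral_Icc_eq_integral_Ioc, ← intervalIntegral.integral_of_le (by norm_num : (0:ℝ) ≤ 1)]
    rw [intervalIntegral.integral_const_mul]
    rw [intervalIntegral.integral_sub
      ((Continuous.intervalIntegrable (by fun_prop) 0 1))
      ((Continuous.intervalIntegrable (by fun_prop) 0 1))]
    rw [exp_int _ _ _ _ (div_ne_zero (sub_ne_zero.mpr hst) hε'),
        exp_int _ _ _ _ (div_ne_zero hs hε')]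
    rw [show ((s-t)/ε)*1 + t/ε = s/ε by (field_simp; ring),
        show ((s-t)/ε)*0 + t/ε = t/ε by ring,
        show (s/ε)*1 + 0 = s/ε by ring, show (s/ε)*0 + 0 = (0:ℝ) by ring,
        Real.exp_zero, ← hA, ← hB]
    field_simp
    ring
  have hpos : 0 < ∫ p in S, f p := by
    rw [setIntegral_pos_iff_support_of_nonneg_ae
      (Filter.Eventually.of_forall fun p => (Real.exp_pos _).le) hInt]
    have hsupp : Function.support f = univ := by
      ext p; simp [hfdef, Real.exp_ne_zero]
    rw [hsupp, univ_inter]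
    have hsub : (Ioo (0:ℝ) (1/2)) ×ˢ (Ioo (0:ℝ) (1/2)) ⊆ S := by
      rintro ⟨x,y⟩ ⟨⟨hx1,hx2⟩,⟨hy1,hy2⟩⟩
      exact ⟨hx1.le, hy1.le, by simp only; linarith⟩
    calc (0:ENNReal) < volume ((Ioo (0:ℝ) (1/2)) ×ˢ (Ioo (0:ℝ) (1/2))) := by
          rw [show (volume : Measure (ℝ×ℝ)) = volume.prod volume from Measure.volume_eq_prod _ _,
            Measure.prod_prod, Real.volume_Ioo]
          norm_num
      _ ≤ volume S := measure_mono hsub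
  have hD : s*B - t*A + t - s ≠ 0 := by
    intro h
    rw [key, h] at hpos
    simp at hpos
  refine ⟨hD, ?_⟩
  have h1d : ∫ x in Icc (0:ℝ) 1, Real.exp (s*x/ε) = (A - 1) * ε / s := by
    rw [integral_Icc_eq_integral_Ioc, ← intervalIntegral.integral_of_le (by norm_num : (0:ℝ) ≤ 1)]
    have : ∀ x : ℝ, Real.exp (s*x/ε) = Real.exp ((s/ε)*x + 0) := by
      intro x; congr 1; field_simp; ring
    simp_rw [this]
    rw [exp_int _ _ _ _ (div_ne_zero hs hε'),
      show (s/ε)*1 + 0 = s/ε by ring, show (s/ε)*0 + 0 = (0:ℝ) by ring, Real.exp_zero, ← hA]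
    field_simp
  rw [key, h1d]
  field_simp
end

section
/- Let ε > 0 and s, t, r ∈ ℝ be pairwise distinct and all nonzero. Set Δ := s·t·(t−s)·exp(r/ε) + s·r·(s−r)·exp(t/ε) + r·t·(r−t)·exp(s/ε) + (t−s)·(s−r)·(r−t). Then Δ ≠ 0, and the three-dimensional Bernoulli function B₃^ε(s,t,r) := ε · (2 ∬_{Δ₂} exp((s·x₁ + t·x₂)/ε) dx₁ dx₂) / (6 ∭_{Δ₃} exp((s·x₁ + t·x₂ + r·x₃)/ε) dx₁ dx₂ dx₃) satisfies the closed-form identity B₃^ε(s,t,r) = −r·(s−r)·(r−t)·(s·exp(t/ε) − t·exp(s/ε) + t − s) / (3·Δ). (Closed form of the Bernoulli function B₃^ε from equations (A.1c) and (A.4).) -/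
open MeasureTheory Real

lemma int_exp (k : ℝ) (hk : k ≠ 0) (v : ℝ) :
    ∫ x in (0:ℝ)..v, Real.exp (k * x) = (Real.exp (k * v) - 1) / k := by
  have h : ∀ x ∈ Set.uIcc (0:ℝ) v,
      HasDerivAt (fun x => Real.exp (k * x) / k) (Real.exp (k * x)) x := by
    intro x _
    have h' := (((hasDerivAt_id x).const_mul k).exp).div_const k
    simpa [mul_one, mul_div_cancel_right₀ _ hk] using h'
  rw [intervalIntegral.integral_eq_sub_of_hasDerivAt h
    ((Real.continuous_exp.comp (continuous_const.mul continuous_id)).intervalIntegrable _ _)]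
  rw [mul_zero, Real.exp_zero]
  ring

lemma iint (C k : ℝ) (v w : ℝ) :
    IntervalIntegrable (fun x => C * Real.exp (k * x)) volume v w :=
  (continuous_const.mul (Real.continuous_exp.comp
    (continuous_const.mul continuous_id))).intervalIntegrable _ _

lemma sect_integral {β : Type*} [MeasureSpace β] [SigmaFinite (volume : Measure β)]
    {S : Set (ℝ × β)} (hS : MeasurableSet S) {f : ℝ × β → ℝ}
    (hf : IntegrableOn f S) :
    ∫ p in S, f p = ∫ x : ℝ, ∫ y in Prod.mk x ⁻¹' S, f (x, y) := by
  rw [← integral_indicator hS]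
  have hint : Integrable (S.indicator f) := (integrable_indicator_iff hS).2 hf
  rw [Measure.volume_eq_prod] at hint ⊢
  rw [integral_prod _ hint]
  refine integral_congr_ae (Filter.Eventually.of_forall fun x => ?_)
  show (∫ (y : β), S.indicator f (x, y)) = ∫ (y : β) in Prod.mk x ⁻¹' S, f (x, y)
  rw [← integral_indicator (measurable_prodMk_left hS)]
  refine integral_congr_ae (Filter.Eventually.of_forall fun y => ?_)
  by_cases h : (x, y) ∈ S <;> simp [Set.indicator, h, Set.mem_preimage]

lemma isCompact_T2 (u : ℝ) :
    IsCompact {p : ℝ × ℝ | 0 ≤ p.1 ∧ 0 ≤ p.2 ∧ p.1 + p.2 ≤ u} := by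
  have hC : IsClosed {p : ℝ × ℝ | 0 ≤ p.1 ∧ 0 ≤ p.2 ∧ p.1 + p.2 ≤ u} :=
    (isClosed_le continuous_const continuous_fst).inter
      ((isClosed_le continuous_const continuous_snd).inter
        (isClosed_le (continuous_fst.add continuous_snd) continuous_const))
  refine IsCompact.of_isClosed_subset (isCompact_Icc (a := ((0:ℝ), (0:ℝ))) (b := (u, u))) hC ?_
  rintro ⟨x, y⟩ ⟨h1, h2, h3⟩
  simp only [Set.mem_Icc, Prod.le_def]
  exact ⟨⟨h1, h2⟩, by constructor <;> linarith⟩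

lemma isCompact_T3 :
    IsCompact {p : ℝ × ℝ × ℝ | 0 ≤ p.1 ∧ 0 ≤ p.2.1 ∧ 0 ≤ p.2.2 ∧ p.1 + p.2.1 + p.2.2 ≤ 1} := by
  have hC : IsClosed {p : ℝ × ℝ × ℝ | 0 ≤ p.1 ∧ 0 ≤ p.2.1 ∧ 0 ≤ p.2.2 ∧ p.1 + p.2.1 + p.2.2 ≤ 1} :=
    (isClosed_le continuous_const continuous_fst).inter
      ((isClosed_le continuous_const (continuous_fst.comp continuous_snd)).inter
        ((isClosed_le continuous_const (continuous_snd.comp continuous_snd)).inter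
          (isClosed_le ((continuous_fst.add (continuous_fst.comp continuous_snd)).add
            (continuous_snd.comp continuous_snd)) continuous_const)))
  refine IsCompact.of_isClosed_subset
    (isCompact_Icc (a := ((0:ℝ), (0:ℝ), (0:ℝ))) (b := (1, 1, 1))) hC ?_
  rintro ⟨x, y, z⟩ ⟨h1, h2, h3, h4⟩
  simp only [Set.mem_Icc, Prod.le_def]
  refine ⟨⟨h1, h2, h3⟩, ?_, ?_, ?_⟩ <;> linarith

lemma slice2 (u : ℝ) (f : ℝ × ℝ → ℝ) (hf : Continuous f) :
    ∫ p in {p : ℝ × ℝ | 0 ≤ p.1 ∧ 0 ≤ p.2 ∧ p.1 + p.2 ≤ u}, f p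
      = ∫ x in Set.Icc (0:ℝ) u, ∫ y in Set.Icc (0:ℝ) (u - x), f (x, y) := by
  set S := {p : ℝ × ℝ | 0 ≤ p.1 ∧ 0 ≤ p.2 ∧ p.1 + p.2 ≤ u} with hSdef
  have hSc : IsClosed S :=
    (isClosed_le continuous_const continuous_fst).inter
      ((isClosed_le continuous_const continuous_snd).inter
        (isClosed_le (continuous_fst.add continuous_snd) continuous_const))
  rw [sect_integral hSc.measurableSet (hf.continuousOn.integrableOn_compact (isCompact_T2 u))]
  have hsec : ∀ x : ℝ, (∫ y in Prod.mk x ⁻¹' S, f (x, y))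
      = (Set.Icc (0:ℝ) u).indicator (fun x => ∫ y in Set.Icc (0:ℝ) (u - x), f (x, y)) x := by
    intro x
    by_cases hx0 : 0 ≤ x
    · have hpre : Prod.mk x ⁻¹' S = Set.Icc 0 (u - x) := by
        ext y
        simp only [Set.mem_preimage, hSdef, Set.mem_setOf_eq, Set.mem_Icc]
        constructor
        · rintro ⟨h1, h2, h3⟩; exact ⟨h2, by linarith⟩
        · rintro ⟨h1, h2⟩; exact ⟨hx0, h1, by linarith⟩
      rw [hpre]
      by_cases hxu : x ≤ u
      · rw [Set.indicator_of_mem (Set.mem_Icc.mpr ⟨hx0, hxu⟩)]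
      · rw [Set.indicator_of_notMem (by simp [Set.mem_Icc, hxu])]
        rw [Set.Icc_eq_empty (by intro h; exact hxu (by linarith)), Measure.restrict_empty,
          integral_zero_measure]
    · have hpre : Prod.mk x ⁻¹' S = ∅ := by
        ext y; simp [hSdef, hx0]
      rw [hpre, Set.indicator_of_notMem (by simp [Set.mem_Icc, hx0]), Measure.restrict_empty,
        integral_zero_measure]
  simp_rw [hsec]
  rw [integral_indicator measurableSet_Icc]

lemma slice3 (f : ℝ × ℝ × ℝ → ℝ) (hf : Continuous f) :
    ∫ p in {p : ℝ × ℝ × ℝ | 0 ≤ p.1 ∧ 0 ≤ p.2.1 ∧ 0 ≤ p.2.2 ∧ p.1 + p.2.1 + p.2.2 ≤ 1}, f p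
      = ∫ x in Set.Icc (0:ℝ) 1,
          ∫ q in {q : ℝ × ℝ | 0 ≤ q.1 ∧ 0 ≤ q.2 ∧ q.1 + q.2 ≤ 1 - x}, f (x, q) := by
  set S := {p : ℝ × ℝ × ℝ | 0 ≤ p.1 ∧ 0 ≤ p.2.1 ∧ 0 ≤ p.2.2 ∧ p.1 + p.2.1 + p.2.2 ≤ 1}
    with hSdef
  have hSc : IsClosed S :=
    (isClosed_le continuous_const continuous_fst).inter
      ((isClosed_le continuous_const (continuous_fst.comp continuous_snd)).inter
        ((isClosed_le continuous_const (continuous_snd.comp continuous_snd)).inter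
          (isClosed_le ((continuous_fst.add (continuous_fst.comp continuous_snd)).add
            (continuous_snd.comp continuous_snd)) continuous_const)))
  rw [sect_integral hSc.measurableSet (hf.continuousOn.integrableOn_compact isCompact_T3)]
  have hsec : ∀ x : ℝ, (∫ q in Prod.mk x ⁻¹' S, f (x, q))
      = (Set.Icc (0:ℝ) 1).indicator
          (fun x => ∫ q in {q : ℝ × ℝ | 0 ≤ q.1 ∧ 0 ≤ q.2 ∧ q.1 + q.2 ≤ 1 - x}, f (x, q)) x := by
    intro x
    by_cases hx0 : 0 ≤ x
    · have hpre : Prod.mk x ⁻¹' S = {q : ℝ × ℝ | 0 ≤ q.1 ∧ 0 ≤ q.2 ∧ q.1 + q.2 ≤ 1 - x} := by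
        ext q
        simp only [Set.mem_preimage, hSdef, Set.mem_setOf_eq]
        constructor
        · rintro ⟨h0, h1, h2, h3⟩; exact ⟨h1, h2, by linarith⟩
        · rintro ⟨h1, h2, h3⟩; exact ⟨hx0, h1, h2, by linarith⟩
      rw [hpre]
      by_cases hxu : x ≤ 1
      · rw [Set.indicator_of_mem (Set.mem_Icc.mpr ⟨hx0, hxu⟩)]
      · rw [Set.indicator_of_notMem (by simp [Set.mem_Icc, hxu])]
        have hemp : {q : ℝ × ℝ | 0 ≤ q.1 ∧ 0 ≤ q.2 ∧ q.1 + q.2 ≤ 1 - x} = ∅ := by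
          ext q
          simp only [Set.mem_setOf_eq, Set.mem_empty_iff_false, iff_false, not_and]
          intro h1 h2; intro h3; linarith
        rw [hemp, Measure.restrict_empty, integral_zero_measure]
    · have hpre : Prod.mk x ⁻¹' S = ∅ := by
        ext q; simp [hSdef, hx0]
      rw [hpre, Set.indicator_of_notMem (by simp [Set.mem_Icc, hx0]), Measure.restrict_empty,
        integral_zero_measure]
  simp_rw [hsec]
  rw [integral_indicator measurableSet_Icc]

lemma val2 (a b : ℝ) (ha : a ≠ 0) (hb : b ≠ 0) (hab : a ≠ b) :
    ∫ p in {p : ℝ × ℝ | 0 ≤ p.1 ∧ 0 ≤ p.2 ∧ p.1 + p.2 ≤ 1}, Real.exp (a * p.1 + b * p.2)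
      = ((Real.exp a - Real.exp b) / (a - b) - (Real.exp a - 1) / a) / b := by
  have hcont : Continuous fun p : ℝ × ℝ => Real.exp (a * p.1 + b * p.2) := by
    apply Real.continuous_exp.comp
    exact (continuous_const.mul continuous_fst).add (continuous_const.mul continuous_snd)
  rw [slice2 1 _ hcont]
  rw [MeasureTheory.integral_Icc_eq_integral_Ioc, ← intervalIntegral.integral_of_le zero_le_one]
  have hEq : Set.EqOn (fun x => ∫ y in Set.Icc (0:ℝ) (1 - x), Real.exp (a * x + b * y))
      (fun x => (Real.exp b / b) * Real.exp ((a - b) * x) - (1 / b) * Real.exp (a * x))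
      (Set.uIcc (0:ℝ) 1) := by
    intro x hx
    rw [Set.uIcc_of_le zero_le_one, Set.mem_Icc] at hx
    have h1x : (0:ℝ) ≤ 1 - x := by linarith [hx.2]
    simp only
    rw [MeasureTheory.integral_Icc_eq_integral_Ioc, ← intervalIntegral.integral_of_le h1x]
    have hsplit : ∀ y : ℝ, Real.exp (a * x + b * y) = Real.exp (a * x) * Real.exp (b * y) := by
      intro y; rw [← Real.exp_add]
    simp_rw [hsplit]
    rw [intervalIntegral.integral_const_mul, int_exp b hb]
    have k1 : Real.exp (a * x) * Real.exp (b * (1 - x))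
        = Real.exp b * Real.exp ((a - b) * x) := by
      rw [← Real.exp_add, ← Real.exp_add]; congr 1; ring
    field_simp
    rw [mul_comm (a - b) x] at k1
    linear_combination k1
  rw [intervalIntegral.integral_congr hEq]
  rw [intervalIntegral.integral_sub (iint _ _ _ _) (iint _ _ _ _),
    intervalIntegral.integral_const_mul, intervalIntegral.integral_const_mul,
    int_exp (a - b) (sub_ne_zero.mpr hab) 1, int_exp a ha 1]
  rw [mul_one, mul_one, Real.exp_sub]
  field_simp [sub_ne_zero.mpr hab]

set_option maxHeartbeats 1000000 in
lemma val3 (a b c : ℝ) (ha : a ≠ 0) (hb : b ≠ 0) (hc : c ≠ 0)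
    (hab : a ≠ b) (hac : a ≠ c) (hbc : b ≠ c) :
    ∫ p in {p : ℝ × ℝ × ℝ | 0 ≤ p.1 ∧ 0 ≤ p.2.1 ∧ 0 ≤ p.2.2 ∧ p.1 + p.2.1 + p.2.2 ≤ 1},
        Real.exp (a * p.1 + b * p.2.1 + c * p.2.2)
      = (((Real.exp a - Real.exp b) / (a - b) - (Real.exp a - Real.exp c) / (a - c)) / (b - c)
          - ((Real.exp a - Real.exp b) / (a - b) - (Real.exp a - 1) / a) / b) / c := by
  have hcont : Continuous fun p : ℝ × ℝ × ℝ => Real.exp (a * p.1 + b * p.2.1 + c * p.2.2) := by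
    apply Real.continuous_exp.comp
    exact ((continuous_const.mul continuous_fst).add
      (continuous_const.mul (continuous_fst.comp continuous_snd))).add
      (continuous_const.mul (continuous_snd.comp continuous_snd))
  rw [slice3 _ hcont]
  have h1 : Set.EqOn
      (fun x => ∫ q in {q : ℝ × ℝ | 0 ≤ q.1 ∧ 0 ≤ q.2 ∧ q.1 + q.2 ≤ 1 - x},
        Real.exp (a * x + b * q.1 + c * q.2))
      (fun x => (Real.exp b / (b * (b - c))) * Real.exp ((a - b) * x)
        + (-Real.exp c / (c * (b - c))) * Real.exp ((a - c) * x)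
        + (1 / (b * c)) * Real.exp (a * x))
      (Set.Icc (0:ℝ) 1) := by
    intro x hx
    rw [Set.mem_Icc] at hx
    have h1x : (0:ℝ) ≤ 1 - x := by linarith [hx.2]
    simp only
    have hcont2 : Continuous fun q : ℝ × ℝ => Real.exp (a * x + b * q.1 + c * q.2) := by
      apply Real.continuous_exp.comp
      exact (continuous_const.add (continuous_const.mul continuous_fst)).add
        (continuous_const.mul continuous_snd)
    rw [slice2 (1 - x) _ hcont2]
    have h2 : Set.EqOn
        (fun y => ∫ z in Set.Icc (0:ℝ) (1 - x - y), Real.exp (a * x + b * y + c * z))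
        (fun y => (Real.exp (a * x + c * (1 - x)) / c) * Real.exp ((b - c) * y)
          - (Real.exp (a * x) / c) * Real.exp (b * y))
        (Set.Icc (0:ℝ) (1 - x)) := by
      intro y hy
      rw [Set.mem_Icc] at hy
      have h1xy : (0:ℝ) ≤ 1 - x - y := by linarith [hy.2]
      simp only
      rw [MeasureTheory.integral_Icc_eq_integral_Ioc, ← intervalIntegral.integral_of_le h1xy]
      have hsplit : ∀ z : ℝ, Real.exp (a * x + b * y + c * z)
          = Real.exp (a * x + b * y) * Real.exp (c * z) := by
        intro z; rw [← Real.exp_add]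
      simp_rw [hsplit]
      rw [intervalIntegral.integral_const_mul, int_exp c hc]
      have r1 : Real.exp (a * x + b * y) = Real.exp (a * x) * Real.exp (b * y) := by
        rw [← Real.exp_add]
      have r2 : Real.exp (c * (1 - x - y)) = Real.exp c / (Real.exp (c * x) * Real.exp (c * y)) := by
        rw [← Real.exp_add, ← Real.exp_sub]; congr 1; ring
      have r3 : Real.exp (a * x + c * (1 - x)) = Real.exp c * Real.exp (a * x) / Real.exp (c * x) := by
        rw [← Real.exp_add, ← Real.exp_sub]; congr 1; ring
      have r4 : Real.exp ((b - c) * y) = Real.exp (b * y) / Real.exp (c * y) := by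
        rw [← Real.exp_sub]; congr 1; ring
      rw [r1, r2, r3, r4]
      set A := Real.exp (a * x) with hA
      set By := Real.exp (b * y) with hBy
      set Cx := Real.exp (c * x) with hCx
      set Cy := Real.exp (c * y) with hCy
      set Ec := Real.exp c with hEc
      have nA : A ≠ 0 := Real.exp_ne_zero _
      have nBy : By ≠ 0 := Real.exp_ne_zero _
      have nCx : Cx ≠ 0 := Real.exp_ne_zero _
      have nCy : Cy ≠ 0 := Real.exp_ne_zero _
      have nEc : Ec ≠ 0 := Real.exp_ne_zero _
      field_simp
    rw [MeasureTheory.setIntegral_congr_fun measurableSet_Icc h2]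
    rw [MeasureTheory.integral_Icc_eq_integral_Ioc, ← intervalIntegral.integral_of_le h1x]
    rw [intervalIntegral.integral_sub (iint _ _ _ _) (iint _ _ _ _),
      intervalIntegral.integral_const_mul, intervalIntegral.integral_const_mul,
      int_exp (b - c) (sub_ne_zero.mpr hbc) (1 - x), int_exp b hb (1 - x)]
    have q1 : Real.exp (a * x + c * (1 - x)) = Real.exp c * Real.exp (a * x) / Real.exp (c * x) := by
      rw [← Real.exp_add, ← Real.exp_sub]; congr 1; ring
    have q2 : Real.exp ((b - c) * (1 - x))
        = Real.exp b * Real.exp (c * x) / (Real.exp c * Real.exp (b * x)) := by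
      rw [← Real.exp_add, ← Real.exp_add, ← Real.exp_sub]; congr 1; ring
    have q3 : Real.exp (b * (1 - x)) = Real.exp b / Real.exp (b * x) := by
      rw [← Real.exp_sub]; congr 1; ring
    have q4 : Real.exp ((a - b) * x) = Real.exp (a * x) / Real.exp (b * x) := by
      rw [← Real.exp_sub]; congr 1; ring
    have q5 : Real.exp ((a - c) * x) = Real.exp (a * x) / Real.exp (c * x) := by
      rw [← Real.exp_sub]; congr 1; ring
    rw [q1, q2, q3, q4, q5]
    set A := Real.exp (a * x) with hA
    set Bx := Real.exp (b * x) with hBx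
    set Cx := Real.exp (c * x) with hCx
    set Eb := Real.exp b with hEb
    set Ec := Real.exp c with hEc
    have nA : A ≠ 0 := Real.exp_ne_zero _
    have nBx : Bx ≠ 0 := Real.exp_ne_zero _
    have nCx : Cx ≠ 0 := Real.exp_ne_zero _
    have nEb : Eb ≠ 0 := Real.exp_ne_zero _
    have nEc : Ec ≠ 0 := Real.exp_ne_zero _
    have nbc : b - c ≠ 0 := sub_ne_zero.mpr hbc
    field_simp
    ring
  rw [MeasureTheory.setIntegral_congr_fun measurableSet_Icc h1]
  rw [MeasureTheory.integral_Icc_eq_integral_Ioc, ← intervalIntegral.integral_of_le zero_le_one]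
  rw [intervalIntegral.integral_add ((iint _ _ _ _).add (iint _ _ _ _)) (iint _ _ _ _),
    intervalIntegral.integral_add (iint _ _ _ _) (iint _ _ _ _),
    intervalIntegral.integral_const_mul, intervalIntegral.integral_const_mul,
    intervalIntegral.integral_const_mul,
    int_exp (a - b) (sub_ne_zero.mpr hab) 1, int_exp (a - c) (sub_ne_zero.mpr hac) 1,
    int_exp a ha 1]
  rw [mul_one, mul_one, mul_one, Real.exp_sub, Real.exp_sub]
  set Ea := Real.exp a with hEa
  set Eb := Real.exp b with hEb
  set Ec := Real.exp c with hEc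
  have nEa : Ea ≠ 0 := Real.exp_ne_zero _
  have nEb : Eb ≠ 0 := Real.exp_ne_zero _
  have nEc : Ec ≠ 0 := Real.exp_ne_zero _
  have nab : a - b ≠ 0 := sub_ne_zero.mpr hab
  have nac : a - c ≠ 0 := sub_ne_zero.mpr hac
  have nbc : b - c ≠ 0 := sub_ne_zero.mpr hbc
  field_simp
  ring

lemma pos3 (a b c : ℝ) :
    0 < ∫ p in {p : ℝ × ℝ × ℝ | 0 ≤ p.1 ∧ 0 ≤ p.2.1 ∧ 0 ≤ p.2.2 ∧ p.1 + p.2.1 + p.2.2 ≤ 1},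
        Real.exp (a * p.1 + b * p.2.1 + c * p.2.2) := by
  set S := {p : ℝ × ℝ × ℝ | 0 ≤ p.1 ∧ 0 ≤ p.2.1 ∧ 0 ≤ p.2.2 ∧ p.1 + p.2.1 + p.2.2 ≤ 1} with hS
  have hcont : Continuous fun p : ℝ × ℝ × ℝ => Real.exp (a * p.1 + b * p.2.1 + c * p.2.2) := by
    apply Real.continuous_exp.comp
    exact ((continuous_const.mul continuous_fst).add
      (continuous_const.mul (continuous_fst.comp continuous_snd))).add
      (continuous_const.mul (continuous_snd.comp continuous_snd))
  have hfi : IntegrableOn (fun p : ℝ × ℝ × ℝ => Real.exp (a * p.1 + b * p.2.1 + c * p.2.2)) S :=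
    hcont.continuousOn.integrableOn_compact isCompact_T3
  rw [setIntegral_pos_iff_support_of_nonneg_ae
    (Filter.Eventually.of_forall fun p => (Real.exp_pos _).le) hfi]
  have hsupp : (Function.support fun p : ℝ × ℝ × ℝ =>
      Real.exp (a * p.1 + b * p.2.1 + c * p.2.2)) ∩ S = S := by
    ext p; simp [Function.mem_support, Real.exp_ne_zero]
  rw [hsupp]
  have hsub : Set.Ioo (0:ℝ) (1/4) ×ˢ (Set.Ioo (0:ℝ) (1/4) ×ˢ Set.Ioo (0:ℝ) (1/4)) ⊆ S := by
    rintro ⟨x, y, z⟩ ⟨hx, hy, hz⟩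
    rw [Set.mem_Ioo] at hx hy hz
    refine ⟨hx.1.le, hy.1.le, hz.1.le, by linarith [hx.2, hy.2, hz.2]⟩
  refine lt_of_lt_of_le ?_ (measure_mono hsub)
  rw [Measure.volume_eq_prod, Measure.prod_prod, Measure.volume_eq_prod, Measure.prod_prod]
  simp only [Real.volume_Ioo, ENNReal.mul_pos_iff, ENNReal.ofReal_pos]
  norm_num

set_option maxHeartbeats 1000000 in
/-- closed form of the 3D Bernoulli function, (A.1c)/(A.4):
for `ε > 0` and pairwise distinct nonzero `s, t, r`, the quantity
`Δ = s t (t−s) e^{r/ε} + s r (s−r) e^{t/ε} + r t (r−t) e^{s/ε} + (t−s)(s−r)(r−t)`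
is nonzero, and
`B₃^ε(s,t,r) = ε (2 ∬_{Δ₂} e^{(s x₁ + t x₂)/ε}) / (6 ∭_{Δ₃} e^{(s x₁ + t x₂ + r x₃)/ε})
            = −r (s−r)(r−t)(s e^{t/ε} − t e^{s/ε} + t − s) / (3 Δ)`,
where `Δ₂` and `Δ₃` are the unit 2- and 3-simplexes. -/
theorem stmt_10 (ε s t r : ℝ) (hε : 0 < ε) (hs : s ≠ 0) (ht : t ≠ 0) (hr : r ≠ 0)
    (hst : s ≠ t) (hsr : s ≠ r) (htr : t ≠ r) :
    s * t * (t - s) * Real.exp (r / ε) + s * r * (s - r) * Real.exp (t / ε) +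
        r * t * (r - t) * Real.exp (s / ε) + (t - s) * (s - r) * (r - t) ≠ 0 ∧
    ε * (2 * ∫ p in {p : ℝ × ℝ | 0 ≤ p.1 ∧ 0 ≤ p.2 ∧ p.1 + p.2 ≤ 1},
          Real.exp ((s * p.1 + t * p.2) / ε)) /
        (6 * ∫ p in {p : ℝ × ℝ × ℝ |
            0 ≤ p.1 ∧ 0 ≤ p.2.1 ∧ 0 ≤ p.2.2 ∧ p.1 + p.2.1 + p.2.2 ≤ 1},
          Real.exp ((s * p.1 + t * p.2.1 + r * p.2.2) / ε)) =
      -r * (s - r) * (r - t) *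
          (s * Real.exp (t / ε) - t * Real.exp (s / ε) + t - s) /
        (3 * (s * t * (t - s) * Real.exp (r / ε) + s * r * (s - r) * Real.exp (t / ε) +
          r * t * (r - t) * Real.exp (s / ε) + (t - s) * (s - r) * (r - t))) := by
  have hεne : ε ≠ 0 := hε.ne'
  have ha : s / ε ≠ 0 := div_ne_zero hs hεne
  have hb : t / ε ≠ 0 := div_ne_zero ht hεne
  have hc : r / ε ≠ 0 := div_ne_zero hr hεne
  have hab : s / ε ≠ t / ε := by
    intro h; apply hst; field_simp at h; exact h
  have hac : s / ε ≠ r / ε := by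
    intro h; apply hsr; field_simp at h; exact h
  have hbc : t / ε ≠ r / ε := by
    intro h; apply htr; field_simp at h; exact h
  have h2' : (fun p : ℝ × ℝ => Real.exp ((s * p.1 + t * p.2) / ε))
      = fun p : ℝ × ℝ => Real.exp (s / ε * p.1 + t / ε * p.2) := by
    funext p; congr 1; field_simp
  have h3' : (fun p : ℝ × ℝ × ℝ => Real.exp ((s * p.1 + t * p.2.1 + r * p.2.2) / ε))
      = fun p : ℝ × ℝ × ℝ => Real.exp (s / ε * p.1 + t / ε * p.2.1 + r / ε * p.2.2) := by
    funext p; congr 1; field_simp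
  rw [h2', h3', val2 (s/ε) (t/ε) ha hb hab, val3 (s/ε) (t/ε) (r/ε) ha hb hc hab hac hbc]
  have hpos : 0 < (((Real.exp (s/ε) - Real.exp (t/ε)) / (s/ε - t/ε)
        - (Real.exp (s/ε) - Real.exp (r/ε)) / (s/ε - r/ε)) / (t/ε - r/ε)
      - ((Real.exp (s/ε) - Real.exp (t/ε)) / (s/ε - t/ε)
        - (Real.exp (s/ε) - 1) / (s/ε)) / (t/ε)) / (r/ε) := by
    rw [← val3 (s/ε) (t/ε) (r/ε) ha hb hc hab hac hbc]
    exact pos3 _ _ _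
  set D := (((Real.exp (s/ε) - Real.exp (t/ε)) / (s/ε - t/ε)
        - (Real.exp (s/ε) - Real.exp (r/ε)) / (s/ε - r/ε)) / (t/ε - r/ε)
      - ((Real.exp (s/ε) - Real.exp (t/ε)) / (s/ε - t/ε)
        - (Real.exp (s/ε) - 1) / (s/ε)) / (t/ε)) / (r/ε) with hD
  have nab : s / ε - t / ε ≠ 0 := sub_ne_zero.mpr hab
  have nac : s / ε - r / ε ≠ 0 := sub_ne_zero.mpr hac
  have nbc : t / ε - r / ε ≠ 0 := sub_ne_zero.mpr hbc
  have nst : t - s ≠ 0 := sub_ne_zero.mpr (Ne.symm hst)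
  have nsr : s - r ≠ 0 := sub_ne_zero.mpr hsr
  have nrt : r - t ≠ 0 := sub_ne_zero.mpr (Ne.symm htr)
  have n1 : s - t ≠ 0 := sub_ne_zero.mpr hst
  have n2 : t - r ≠ 0 := sub_ne_zero.mpr htr
  have n3 : r - s ≠ 0 := sub_ne_zero.mpr (Ne.symm hsr)
  have hM : -(s * t * r * (t - s) * (s - r) * (r - t)) / ε ^ 3 ≠ 0 := by
    apply div_ne_zero _ (pow_ne_zero _ hεne)
    simp only [neg_ne_zero]
    exact mul_ne_zero (mul_ne_zero (mul_ne_zero (mul_ne_zero (mul_ne_zero hs ht) hr) nst) nsr) nrt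
  have hDelta : s * t * (t - s) * Real.exp (r / ε) + s * r * (s - r) * Real.exp (t / ε) +
      r * t * (r - t) * Real.exp (s / ε) + (t - s) * (s - r) * (r - t)
      = D * (-(s * t * r * (t - s) * (s - r) * (r - t)) / ε ^ 3) := by
    rw [hD]
    set Ea := Real.exp (s / ε) with hEa
    set Eb := Real.exp (t / ε) with hEb
    set Ec := Real.exp (r / ε) with hEc
    have nEa : Ea ≠ 0 := Real.exp_ne_zero _
    have nEb : Eb ≠ 0 := Real.exp_ne_zero _
    have nEc : Ec ≠ 0 := Real.exp_ne_zero _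
    field_simp
    ring
  have hΔne : s * t * (t - s) * Real.exp (r / ε) + s * r * (s - r) * Real.exp (t / ε) +
      r * t * (r - t) * Real.exp (s / ε) + (t - s) * (s - r) * (r - t) ≠ 0 := by
    rw [hDelta]; exact mul_ne_zero hpos.ne' hM
  refine ⟨hΔne, ?_⟩
  rw [div_eq_div_iff (by positivity) (by
    intro h
    rcases mul_eq_zero.mp h with h | h
    · norm_num at h
    · exact hΔne h)]
  set Ea := Real.exp (s / ε) with hEa
  set Eb := Real.exp (t / ε) with hEb
  set Ec := Real.exp (r / ε) with hEc
  have nEa : Ea ≠ 0 := Real.exp_ne_zero _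
  have nEb : Eb ≠ 0 := Real.exp_ne_zero _
  have nEc : Ec ≠ 0 := Real.exp_ne_zero _
  rw [hD]
  field_simp
  ring
end

section
/- Let s, t ∈ ℝ with s ≠ 0, t ≠ 0 and s ≠ t, and for ε > 0 set B₂^ε(s,t) := t·(t−s)·(exp(s/ε) − 1) / (2·(s·exp(t/ε) − t·exp(s/ε) + t − s)). Then as ε → 0⁺, B₂^ε(s,t) converges to B₂⁰(s,t), where B₂⁰(s,t) = (s−t)/2 if s > t and s > 0; B₂⁰(s,t) = 0 if t > s and t > 0; and B₂⁰(s,t) = −t/2 if s < 0 and t < 0. (Limiting case (A.3) of the two-dimensional Bernoulli function as the diffusion coefficient vanishes.) -/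
open Filter Topology

private lemma expZero {c : ℝ} (hc : c < 0) :
    Tendsto (fun x : ℝ => Real.exp (c * x)) atTop (nhds 0) :=
  Real.tendsto_exp_atBot.comp ((tendsto_const_mul_atBot_of_neg hc).2 tendsto_id)

/-- limit (A.3): for `s ≠ 0`, `t ≠ 0`, `s ≠ t`, as `ε → 0⁺`,
`B₂^ε(s,t) = t(t−s)(e^{s/ε} − 1) / (2(s e^{t/ε} − t e^{s/ε} + t − s))` tends to
`B₂⁰(s,t)`, which is `(s−t)/2` if `s = max{s,t} > 0`, `0` if `t = max{s,t} > 0`,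
and `−t/2` if `s < 0` and `t < 0` (these cases being exhaustive and mutually
exclusive under the stated hypotheses). -/
theorem stmt_12 (s t : ℝ) (hs : s ≠ 0) (ht : t ≠ 0) (hst : s ≠ t) :
    Tendsto
      (fun ε : ℝ =>
        t * (t - s) * (Real.exp (s / ε) - 1) /
          (2 * (s * Real.exp (t / ε) - t * Real.exp (s / ε) + t - s)))
      (nhdsWithin 0 (Set.Ioi 0))
      (nhds (if t < s ∧ 0 < s then (s - t) / 2
        else if s < t ∧ 0 < t then 0
        else -t / 2)) := by
  have hts : t - s ≠ 0 := sub_ne_zero.2 (Ne.symm hst)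
  -- reduce to a limit along atTop
  set L : ℝ := (if t < s ∧ 0 < s then (s - t) / 2
        else if s < t ∧ 0 < t then 0
        else -t / 2) with hL
  have main : Tendsto (fun x : ℝ =>
      t * (t - s) * (Real.exp (s * x) - 1) /
        (2 * (s * Real.exp (t * x) - t * Real.exp (s * x) + t - s))) atTop (nhds L) := by
    rcases lt_trichotomy s t with hlt | heq | hgt
    · -- s < t
      rcases lt_or_gt_of_ne ht with htneg | htpos
      · -- s < t < 0 : third case
        have hsneg : s < 0 := hlt.trans htneg
        have : ¬ (t < s ∧ 0 < s) := by rintro ⟨h1, h2⟩; linarith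
        have h2 : ¬ (s < t ∧ 0 < t) := by rintro ⟨h1, h2⟩; linarith
        rw [hL, if_neg this, if_neg h2]
        have hnum : Tendsto (fun x : ℝ => t * (t - s) * (Real.exp (s * x) - 1)) atTop
            (nhds (t * (t - s) * (0 - 1))) :=
          (tendsto_const_nhds.mul ((expZero hsneg).sub tendsto_const_nhds))
        have hden : Tendsto (fun x : ℝ =>
            2 * (s * Real.exp (t * x) - t * Real.exp (s * x) + t - s)) atTop
            (nhds (2 * (s * 0 - t * 0 + t - s))) := by
          apply tendsto_const_nhds.mul
          exact (((tendsto_const_nhds.mul (expZero htneg)).sub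
            (tendsto_const_nhds.mul (expZero hsneg))).add tendsto_const_nhds).sub
            tendsto_const_nhds
        have := hnum.div hden (by simp; intro h; exact hts (by linarith))
        convert this using 2
        · rfl
        rw [eq_div_iff (by simp; intro h; exact hts (by linarith))]
        ring
      · -- s < t, 0 < t : second case
        have hc1 : ¬ (t < s ∧ 0 < s) := by rintro ⟨h1, h2⟩; linarith
        rw [hL, if_neg hc1, if_pos ⟨hlt, htpos⟩]
        -- divide numerator and denominator by exp (t*x)
        have key : ∀ x : ℝ,
            t * (t - s) * (Real.exp (s * x) - 1) /
              (2 * (s * Real.exp (t * x) - t * Real.exp (s * x) + t - s)) =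
            t * (t - s) * (Real.exp ((s - t) * x) - Real.exp (-(t * x))) /
              (2 * (s - t * Real.exp ((s - t) * x) + (t - s) * Real.exp (-(t * x)))) := by
          intro x
          rw [← mul_div_mul_right _ _ (Real.exp_ne_zero (-(t * x)))]
          have h1 : Real.exp (t * x) * Real.exp (-(t * x)) = 1 := by
            rw [← Real.exp_add]; simp
          have h2 : Real.exp (s * x) * Real.exp (-(t * x)) = Real.exp ((s - t) * x) := by
            rw [← Real.exp_add]; congr 1; ring
          congr 1
          · linear_combination t * (t - s) * h2
          · linear_combination 2 * s * h1 - 2 * t * h2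
        simp only [key]
        have hst' : s - t < 0 := by linarith
        have htn : -t < 0 := by linarith
        have hnum : Tendsto (fun x : ℝ =>
            t * (t - s) * (Real.exp ((s - t) * x) - Real.exp (-(t * x)))) atTop
            (nhds (t * (t - s) * (0 - 0))) := by
          apply tendsto_const_nhds.mul
          exact (expZero hst').sub (by simpa [neg_mul] using expZero htn)
        have hden : Tendsto (fun x : ℝ =>
            2 * (s - t * Real.exp ((s - t) * x) + (t - s) * Real.exp (-(t * x)))) atTop
            (nhds (2 * (s - t * 0 + (t - s) * 0))) := by
          apply tendsto_const_nhds.mul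
          exact ((tendsto_const_nhds.sub (tendsto_const_nhds.mul (expZero hst'))).add
            (tendsto_const_nhds.mul (by simpa [neg_mul] using expZero htn)))
        have := hnum.div hden (by simp [hs])
        convert this using 2
        · rfl
        simp
    · exact absurd heq hst
    · -- t < s
      rcases lt_or_gt_of_ne hs with hsneg | hspos
      · -- t < s < 0 : third case
        have htneg : t < 0 := hgt.trans hsneg
        have hc1 : ¬ (t < s ∧ 0 < s) := by rintro ⟨h1, h2⟩; linarith
        have hc2 : ¬ (s < t ∧ 0 < t) := by rintro ⟨h1, h2⟩; linarith
        rw [hL, if_neg hc1, if_neg hc2]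
        have hnum : Tendsto (fun x : ℝ => t * (t - s) * (Real.exp (s * x) - 1)) atTop
            (nhds (t * (t - s) * (0 - 1))) :=
          (tendsto_const_nhds.mul ((expZero hsneg).sub tendsto_const_nhds))
        have hden : Tendsto (fun x : ℝ =>
            2 * (s * Real.exp (t * x) - t * Real.exp (s * x) + t - s)) atTop
            (nhds (2 * (s * 0 - t * 0 + t - s))) := by
          apply tendsto_const_nhds.mul
          exact (((tendsto_const_nhds.mul (expZero htneg)).sub
            (tendsto_const_nhds.mul (expZero hsneg))).add tendsto_const_nhds).sub
            tendsto_const_nhds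
        have := hnum.div hden (by simp; intro h; exact hts (by linarith))
        convert this using 2
        · rfl
        rw [eq_div_iff (by simp; intro h; exact hts (by linarith))]
        ring
      · -- t < s, 0 < s : first case
        rw [hL, if_pos ⟨hgt, hspos⟩]
        have key : ∀ x : ℝ,
            t * (t - s) * (Real.exp (s * x) - 1) /
              (2 * (s * Real.exp (t * x) - t * Real.exp (s * x) + t - s)) =
            t * (t - s) * (1 - Real.exp (-(s * x))) /
              (2 * (s * Real.exp ((t - s) * x) - t + (t - s) * Real.exp (-(s * x)))) := by
          intro x
          rw [← mul_div_mul_right _ _ (Real.exp_ne_zero (-(s * x)))]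
          have h1 : Real.exp (s * x) * Real.exp (-(s * x)) = 1 := by
            rw [← Real.exp_add]; simp
          have h2 : Real.exp (t * x) * Real.exp (-(s * x)) = Real.exp ((t - s) * x) := by
            rw [← Real.exp_add]; congr 1; ring
          congr 1
          · linear_combination t * (t - s) * h1
          · linear_combination 2 * s * h2 - 2 * t * h1
        simp only [key]
        have hts' : t - s < 0 := by linarith
        have hsn : -s < 0 := by linarith
        have hnum : Tendsto (fun x : ℝ =>
            t * (t - s) * (1 - Real.exp (-(s * x)))) atTop
            (nhds (t * (t - s) * (1 - 0))) :=
          tendsto_const_nhds.mul (tendsto_const_nhds.sub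
            (by simpa [neg_mul] using expZero hsn))
        have hden : Tendsto (fun x : ℝ =>
            2 * (s * Real.exp ((t - s) * x) - t + (t - s) * Real.exp (-(s * x)))) atTop
            (nhds (2 * (s * 0 - t + (t - s) * 0))) := by
          apply tendsto_const_nhds.mul
          exact ((tendsto_const_nhds.mul (expZero hts')).sub tendsto_const_nhds).add
            (tendsto_const_nhds.mul (by simpa [neg_mul] using expZero hsn))
        have := hnum.div hden (by simp [ht])
        convert this using 2
        · rfl
        rw [eq_div_iff (by simp [ht])]
        ring
  have := main.comp tendsto_inv_nhdsGT_zero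
  simpa [Function.comp_def, div_eq_mul_inv, mul_comm] using this
end

section
/- Let s, t, r ∈ ℝ be pairwise distinct and all nonzero, and for ε > 0 set B₃^ε(s,t,r) := −r·(s−r)·(r−t)·(s·exp(t/ε) − t·exp(s/ε) + t − s) / (3·(s·t·(t−s)·exp(r/ε) + s·r·(s−r)·exp(t/ε) + r·t·(r−t)·exp(s/ε) + (t−s)·(s−r)·(r−t))). Then as ε → 0⁺, B₃^ε(s,t,r) converges to B₃⁰(s,t,r), where B₃⁰(s,t,r) = (s−r)/3 if s = max{s,t,r} and s > 0; B₃⁰(s,t,r) = (t−r)/3 if t = max{s,t,r} and t > 0; B₃⁰(s,t,r) = 0 if r = max{s,t,r} and r > 0; and B₃⁰(s,t,r) = −r/3 if s < 0, t < 0 and r < 0. (Limiting case (A.4) of the three-dimensional Bernoulli function as the diffusion coefficient vanishes.) -/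
open Filter Topology

private lemma exp_neg_lim {a : ℝ} (ha : a < 0) :
    Tendsto (fun x : ℝ => Real.exp (a * x)) atTop (nhds 0) := by
  have h : Tendsto (fun x : ℝ => a * x) atTop atBot :=
    (tendsto_const_mul_atBot_of_neg ha).2 tendsto_id
  exact Real.tendsto_exp_atBot.comp h

private lemma lim0 (c : ℝ) {a : ℝ} (ha : a < 0) :
    Tendsto (fun x : ℝ => c * Real.exp (a * x)) atTop (nhds 0) := by
  simpa using (exp_neg_lim ha).const_mul c

private lemma limc (c : ℝ) {a : ℝ} (ha : a = 0) :
    Tendsto (fun x : ℝ => c * Real.exp (a * x)) atTop (nhds c) := by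
  subst ha; simp

private lemma quot_lim (a1 a2 a3 M c1 c2 c3 c4 d1 d2 d3 d4 : ℝ) {L1 L2 : ℝ}
    (h1 : Tendsto (fun x : ℝ => c1 * Real.exp ((a1 - M) * x) + c2 * Real.exp ((a2 - M) * x)
        + c3 * Real.exp ((a3 - M) * x) + c4 * Real.exp (-M * x)) atTop (nhds L1))
    (h2 : Tendsto (fun x : ℝ => d1 * Real.exp ((a1 - M) * x) + d2 * Real.exp ((a2 - M) * x)
        + d3 * Real.exp ((a3 - M) * x) + d4 * Real.exp (-M * x)) atTop (nhds L2))
    (hL2 : L2 ≠ 0) :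
    Tendsto (fun x : ℝ => (c1 * Real.exp (a1 * x) + c2 * Real.exp (a2 * x)
        + c3 * Real.exp (a3 * x) + c4) /
        (d1 * Real.exp (a1 * x) + d2 * Real.exp (a2 * x) + d3 * Real.exp (a3 * x) + d4))
      atTop (nhds (L1 / L2)) := by
  refine (h1.div h2 hL2).congr fun x => ?_
  rw [Pi.div_apply]
  have hE : Real.exp (-M * x) ≠ 0 := (Real.exp_pos _).ne'
  conv_rhs => rw [← mul_div_mul_right _ _ hE]
  congr 1 <;>
  · simp only [sub_mul, Real.exp_sub, neg_mul, Real.exp_neg]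
    ring

private noncomputable def F (s t r : ℝ) : ℝ → ℝ := fun x =>
  -r * (s - r) * (r - t) * (s * Real.exp (t * x) - t * Real.exp (s * x) + t - s) /
    (3 * (s * t * (t - s) * Real.exp (r * x) + s * r * (s - r) * Real.exp (t * x) +
      r * t * (r - t) * Real.exp (s * x) + (t - s) * (s - r) * (r - t)))

private lemma case_s (s t r : ℝ) (ht : t ≠ 0) (hr : r ≠ 0) (htr : t ≠ r)
    (h1 : t < s) (h2 : r < s) (h3 : 0 < s) :
    Tendsto (F s t r) atTop (nhds ((s - r) / 3)) := by
  have H := quot_lim r t s s 0 (-r*(s-r)*(r-t)*s) (r*(s-r)*(r-t)*t) (-r*(s-r)*(r-t)*(t-s))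
      (3*s*t*(t-s)) (3*s*r*(s-r)) (3*r*t*(r-t)) (3*(t-s)*(s-r)*(r-t))
      ((((lim0 _ (by linarith : r - s < 0)).add (lim0 _ (by linarith : t - s < 0))).add
        (limc _ (by ring : s - s = (0:ℝ)))).add (lim0 _ (by linarith : -s < 0)))
      ((((lim0 _ (by linarith : r - s < 0)).add (lim0 _ (by linarith : t - s < 0))).add
        (limc _ (by ring : s - s = (0:ℝ)))).add (lim0 _ (by linarith : -s < 0)))
      (by
        have : r - t ≠ 0 := sub_ne_zero.2 (Ne.symm htr)
        simp only [zero_add, add_zero]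
        positivity)
  have hrt : r - t ≠ 0 := sub_ne_zero.2 (Ne.symm htr)
  have heq : ((0:ℝ) + 0 + (r*(s-r)*(r-t)*t) + 0) / ((0:ℝ) + 0 + 3*r*t*(r-t) + 0)
      = (s - r) / 3 := by
    field_simp
    ring
  rw [← heq]
  exact H.congr (fun x => by unfold F; ring)


private lemma case_t (s t r : ℝ) (hs : s ≠ 0) (hr : r ≠ 0) (hsr : s ≠ r)
    (h1 : s < t) (h2 : r < t) (h3 : 0 < t) :
    Tendsto (F s t r) atTop (nhds ((t - r) / 3)) := by
  have hsr' : s - r ≠ 0 := sub_ne_zero.2 hsr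
  have H := quot_lim r t s t 0 (-r*(s-r)*(r-t)*s) (r*(s-r)*(r-t)*t) (-r*(s-r)*(r-t)*(t-s))
      (3*s*t*(t-s)) (3*s*r*(s-r)) (3*r*t*(r-t)) (3*(t-s)*(s-r)*(r-t))
      ((((lim0 _ (by linarith : r - t < 0)).add
        (limc _ (by ring : t - t = (0:ℝ)))).add
        (lim0 _ (by linarith : s - t < 0))).add (lim0 _ (by linarith : -t < 0)))
      ((((lim0 _ (by linarith : r - t < 0)).add
        (limc _ (by ring : t - t = (0:ℝ)))).add
        (lim0 _ (by linarith : s - t < 0))).add (lim0 _ (by linarith : -t < 0)))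
      (by simp only [zero_add, add_zero]; positivity)
  have heq : ((0:ℝ) + (-r*(s-r)*(r-t)*s) + 0 + 0) / ((0:ℝ) + 3*s*r*(s-r) + 0 + 0)
      = (t - r) / 3 := by
    field_simp
    ring
  rw [← heq]
  exact H.congr (fun x => by unfold F; ring)

private lemma case_r (s t r : ℝ) (hs : s ≠ 0) (ht : t ≠ 0) (hst : s ≠ t)
    (h1 : s < r) (h2 : t < r) (h3 : 0 < r) :
    Tendsto (F s t r) atTop (nhds 0) := by
  have hts : t - s ≠ 0 := sub_ne_zero.2 (Ne.symm hst)
  have H := quot_lim r t s r 0 (-r*(s-r)*(r-t)*s) (r*(s-r)*(r-t)*t) (-r*(s-r)*(r-t)*(t-s))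
      (3*s*t*(t-s)) (3*s*r*(s-r)) (3*r*t*(r-t)) (3*(t-s)*(s-r)*(r-t))
      ((((limc _ (by ring : r - r = (0:ℝ))).add
        (lim0 _ (by linarith : t - r < 0))).add
        (lim0 _ (by linarith : s - r < 0))).add (lim0 _ (by linarith : -r < 0)))
      ((((limc _ (by ring : r - r = (0:ℝ))).add
        (lim0 _ (by linarith : t - r < 0))).add
        (lim0 _ (by linarith : s - r < 0))).add (lim0 _ (by linarith : -r < 0)))
      (by simp only [zero_add, add_zero]; positivity)
  have heq : ((0:ℝ) + 0 + 0 + 0) / ((3*s*t*(t-s)) + 0 + 0 + 0) = (0:ℝ) := by simp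
  rw [← heq]
  exact H.congr (fun x => by unfold F; ring)

private lemma case_neg (s t r : ℝ) (hst : s ≠ t) (hsr : s ≠ r) (htr : t ≠ r)
    (h1 : s < 0) (h2 : t < 0) (h3 : r < 0) :
    Tendsto (F s t r) atTop (nhds (-r / 3)) := by
  have hts : t - s ≠ 0 := sub_ne_zero.2 (Ne.symm hst)
  have hsr' : s - r ≠ 0 := sub_ne_zero.2 hsr
  have hrt : r - t ≠ 0 := sub_ne_zero.2 (Ne.symm htr)
  have H := quot_lim r t s 0 0 (-r*(s-r)*(r-t)*s) (r*(s-r)*(r-t)*t) (-r*(s-r)*(r-t)*(t-s))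
      (3*s*t*(t-s)) (3*s*r*(s-r)) (3*r*t*(r-t)) (3*(t-s)*(s-r)*(r-t))
      ((((lim0 _ (by linarith : r - 0 < 0)).add
        (lim0 _ (by linarith : t - 0 < 0))).add
        (lim0 _ (by linarith : s - 0 < 0))).add (limc _ (by ring : -(0:ℝ) = 0)))
      ((((lim0 _ (by linarith : r - 0 < 0)).add
        (lim0 _ (by linarith : t - 0 < 0))).add
        (lim0 _ (by linarith : s - 0 < 0))).add (limc _ (by ring : -(0:ℝ) = 0)))
      (by simp only [zero_add, add_zero]; positivity)
  have heq : ((0:ℝ) + 0 + 0 + (-r*(s-r)*(r-t)*(t-s))) / ((0:ℝ) + 0 + 0 + 3*(t-s)*(s-r)*(r-t))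
      = -r / 3 := by
    field_simp
    ring
  rw [← heq]
  exact H.congr (fun x => by unfold F; ring)

/-- limit (A.4): for pairwise distinct nonzero `s, t, r`, as `ε → 0⁺`,
`B₃^ε(s,t,r) = −r(s−r)(r−t)(s e^{t/ε} − t e^{s/ε} + t − s) /
  (3(s t (t−s) e^{r/ε} + s r (s−r) e^{t/ε} + r t (r−t) e^{s/ε} + (t−s)(s−r)(r−t)))`
tends to `B₃⁰(s,t,r)`, which is `(s−r)/3` if `s = max{s,t,r} > 0`, `(t−r)/3` if
`t = max{s,t,r} > 0`, `0` if `r = max{s,t,r} > 0`, and `−r/3` if `s, t, r < 0`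
(these cases being exhaustive and mutually exclusive under the stated hypotheses). -/
theorem stmt_13 (s t r : ℝ) (hs : s ≠ 0) (ht : t ≠ 0) (hr : r ≠ 0)
    (hst : s ≠ t) (hsr : s ≠ r) (htr : t ≠ r) :
    Tendsto
      (fun ε : ℝ =>
        -r * (s - r) * (r - t) *
            (s * Real.exp (t / ε) - t * Real.exp (s / ε) + t - s) /
          (3 * (s * t * (t - s) * Real.exp (r / ε) +
            s * r * (s - r) * Real.exp (t / ε) +
            r * t * (r - t) * Real.exp (s / ε) + (t - s) * (s - r) * (r - t))))
      (nhdsWithin 0 (Set.Ioi 0))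
      (nhds (if t < s ∧ r < s ∧ 0 < s then (s - r) / 3
        else if s < t ∧ r < t ∧ 0 < t then (t - r) / 3
        else if s < r ∧ t < r ∧ 0 < r then 0
        else -r / 3)) := by

  have hinv : Tendsto (fun ε : ℝ => ε⁻¹) (nhdsWithin 0 (Set.Ioi 0)) atTop :=
    tendsto_inv_nhdsGT_zero
  have hcomp : ∀ L : ℝ, Tendsto (F s t r) atTop (nhds L) →
      Tendsto (fun ε : ℝ =>
        -r * (s - r) * (r - t) *
            (s * Real.exp (t / ε) - t * Real.exp (s / ε) + t - s) /
          (3 * (s * t * (t - s) * Real.exp (r / ε) +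
            s * r * (s - r) * Real.exp (t / ε) +
            r * t * (r - t) * Real.exp (s / ε) + (t - s) * (s - r) * (r - t))))
        (nhdsWithin 0 (Set.Ioi 0)) (nhds L) := by
    intro L hF
    refine (hF.comp hinv).congr fun ε => ?_
    simp [F, Function.comp, div_eq_mul_inv]
  by_cases c1 : t < s ∧ r < s ∧ 0 < s
  · rw [if_pos c1]; exact hcomp _ (case_s s t r ht hr htr c1.1 c1.2.1 c1.2.2)
  rw [if_neg c1]
  by_cases c2 : s < t ∧ r < t ∧ 0 < t
  · rw [if_pos c2]; exact hcomp _ (case_t s t r hs hr hsr c2.1 c2.2.1 c2.2.2)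
  rw [if_neg c2]
  by_cases c3 : s < r ∧ t < r ∧ 0 < r
  · rw [if_pos c3]; exact hcomp _ (case_r s t r hs ht hst c3.1 c3.2.1 c3.2.2)
  rw [if_neg c3]
  have hneg : s < 0 ∧ t < 0 ∧ r < 0 := by
    push_neg at c1 c2 c3
    rcases hst.lt_or_gt with h | h
    · rcases htr.lt_or_gt with h' | h'
      · have hr0 : r < 0 := (c3 (by linarith) h').lt_of_ne hr
        exact ⟨by linarith, by linarith, hr0⟩
      · have ht0 : t < 0 := (c2 h h').lt_of_ne ht
        exact ⟨by linarith, ht0, by linarith⟩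
    · rcases hsr.lt_or_gt with h' | h'
      · have hr0 : r < 0 := (c3 h' (by linarith)).lt_of_ne hr
        exact ⟨by linarith, by linarith, hr0⟩
      · have hs0 : s < 0 := (c1 h h').lt_of_ne hs
        exact ⟨hs0, by linarith, by linarith⟩
  exact hcomp _ (case_neg s t r hst hsr htr hneg.1 hneg.2.1 hneg.2.2)
end
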